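/- arXiv:2411.07158 — 4 statements merged into one kernel-verified Lean document; each statement's English description precedes it below -/
import Mathlib

section
/- Let T be a rooted locally finite tree and U an almost upper-directed (AUD) transition matrix on T. Then U is irreducible if and only if both of the following hold: (a) for every node u ≠ ∅ one has U(u, p(u)) > 0, and (b) for every node v ≠ ∅ there exist a strict ancestor u of v (i.e. u ∈ [[∅,v]], u ≠ v) and a node w ∈ T_v such that U(u, w) > 0. -/
open scoped BigOperators ENNReal

/-- Nodes of trees are finite words over `ℕ`; the root is the empty word. -/
abbrev Word : Type := List ℕ

/-- The parent of a node: the word with its last letter removed. -/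
def par (u : Word) : Word := u.dropLast

/-- A rooted locally finite tree: a set of words containing the root, closed
under prefixes, in which every node has finitely many children. -/
def IsTree (T : Set Word) : Prop :=
  ([] : Word) ∈ T ∧
  (∀ u ∈ T, ∀ v : Word, v <+: u → v ∈ T) ∧
  (∀ u ∈ T, {i : ℕ | u ++ [i] ∈ T}.Finite)

/-- `desc T u` is the set of descendants of `u` in `T` (the subtree `T_u`). -/
def desc (T : Set Word) (u : Word) : Set Word := {w | w ∈ T ∧ u <+: w}

/-- The children of `u` in `T`. -/
def children (T : Set Word) (u : Word) : Set Word := {v | v ∈ T ∧ ∃ i : ℕ, v = u ++ [i]}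

/-- A transition matrix on `T`: nonnegative entries, rows summing to 1 over `T`. -/
def IsTransMatrix (T : Set Word) (U : Word → Word → ℝ) : Prop :=
  (∀ u ∈ T, ∀ v ∈ T, 0 ≤ U u v) ∧ ∀ u ∈ T, HasSum (fun v : T => U u (v : Word)) 1

/-- Almost upper-directed: positive transitions go to the parent or to a descendant. -/
def IsAUD (T : Set Word) (U : Word → Word → ℝ) : Prop :=
  ∀ u ∈ T, ∀ v ∈ T, 0 < U u v → v = par u ∨ v ∈ desc T u

/-- Almost lower-directed: positive transitions go to a child or to an ancestor. -/
def IsALD (T : Set Word) (D : Word → Word → ℝ) : Prop :=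
  ∀ u ∈ T, ∀ v ∈ T, 0 < D u v → v ∈ children T u ∨ v <+: u

/-- Random-walk transition matrix: positive transitions go to `u`, its parent or a child. -/
def IsRW (T : Set Word) (M : Word → Word → ℝ) : Prop :=
  ∀ u ∈ T, ∀ v ∈ T, 0 < M u v → v = u ∨ v = par u ∨ v ∈ children T u

/-- Irreducibility: any node can be reached from any other by positive transitions. -/
def IrreducibleOn (T : Set Word) (U : Word → Word → ℝ) : Prop :=
  ∀ u ∈ T, ∀ v ∈ T, ∃ (n : ℕ) (x : ℕ → Word),
    x 0 = u ∧ x n = v ∧ (∀ k ≤ n, x k ∈ T) ∧ ∀ k < n, 0 < U (x k) (x (k + 1))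

/-- The weight of a path (a list of nodes): product of the transitions along it. -/
def wgt (U : Word → Word → ℝ) : List Word → ℝ
  | x :: y :: rest => U x y * wgt U (y :: rest)
  | _ => 1

/-- A first-return loop at the root. -/
def IsLoop (T : Set Word) (γ : List Word) : Prop :=
  2 ≤ γ.length ∧ γ.head? = some ([] : Word) ∧ γ.getLast? = some ([] : Word) ∧
  (∀ x ∈ γ, x ∈ T) ∧
  ∀ k, 0 < k → k < γ.length - 1 → γ.getD k [] ≠ ([] : Word)

/-- The total weight of first-return loops at the root. -/
noncomputable def loopSum (T : Set Word) (U : Word → Word → ℝ) : ℝ :=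
  ∑' γ : {γ : List Word // IsLoop T γ}, wgt U γ.1

/-- Recurrence: the total weight of first-return loops at the root is 1. -/
def Recurrent (T : Set Word) (U : Word → Word → ℝ) : Prop := loopSum T U = 1

/-- Expected return time to the root. -/
noncomputable def returnTime (T : Set Word) (U : Word → Word → ℝ) : ℝ≥0∞ :=
  ∑' γ : {γ : List Word // IsLoop T γ},
    ((γ.1.length - 1 : ℕ) : ℝ≥0∞) * ENNReal.ofReal (wgt U γ.1)

/-- Positive recurrence: recurrent with finite expected return time. -/
def PosRecurrent (T : Set Word) (U : Word → Word → ℝ) : Prop :=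
  Recurrent T U ∧ returnTime T U < ⊤

/-- `descWeight T U a b = U(a, T_b)`, the total weight from `a` into the subtree `T_b`. -/
noncomputable def descWeight (T : Set Word) (U : Word → Word → ℝ) (a b : Word) : ℝ :=
  ∑' w : desc T b, U a (w : Word)

/-- The matrix `(Id - ᵘU)^{(u)}`: rows/columns indexed by the strict prefixes of `u`
(the prefix of length `i` corresponds to the index `i`), the column of `u` removed. -/
noncomputable def hMat (T : Set Word) (U : Word → Word → ℝ) (u : Word) :
    Matrix (Fin u.length) (Fin u.length) ℝ :=
  Matrix.of fun i j =>
    (if i = j then 1 else 0) -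
      (if (i : ℕ) ≤ (j : ℕ) + 1 then
        descWeight T U (u.take i) (u.take j) - descWeight T U (u.take i) (u.take ((j : ℕ) + 1))
       else 0)

/-- The h-invariant measure `π` of an AUD transition matrix, with `π(∅) = 1`:
`π(u) = det((Id - ᵘU)^{(u)}) / ∏_{∅ ≠ v ⪯ u} U(v, p(v))`. -/
noncomputable def hInv (T : Set Word) (U : Word → Word → ℝ) (u : Word) : ℝ :=
  (hMat T U u).det / ∏ k ∈ Finset.range u.length, U (u.take (k + 1)) (u.take k)

/-- Paths from `i` to the root whose interior stays away from the root and below height `b`. -/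
def IsEscape (T : Set Word) (i : Word) (b : ℕ) (γ : List Word) : Prop :=
  2 ≤ γ.length ∧ γ.head? = some i ∧ γ.getLast? = some ([] : Word) ∧
  (∀ x ∈ γ, x ∈ T) ∧
  ∀ k, 0 < k → k < γ.length - 1 → γ.getD k [] ≠ ([] : Word) ∧ (γ.getD k []).length < b

/-- `qval T U i b`: total weight of paths from `i` to the root staying away from the
root and below height `b` in their interior. -/
noncomputable def qval (T : Set Word) (U : Word → Word → ℝ) (i : Word) (b : ℕ) : ℝ :=
  ∑' γ : {γ : List Word // IsEscape T i b γ}, wgt U γ.1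

/-- An end of a tree: an infinite injective path starting at the root. -/
def IsEnd (T : Set Word) (p : ℕ → Word) : Prop :=
  p 0 = [] ∧ ∀ k, p (k + 1) ∈ children T (p k)

/-- `T^𝕡`: the nodes of the end `𝕡` together with the finite subtrees hanging from
its neighbors. -/
def endTree (T : Set Word) (p : ℕ → Word) : Set Word :=
  Set.range p ∪
    {v | v ∈ T ∧ ∃ w ∈ T, w <+: v ∧ w ∉ Set.range p ∧ par w ∈ Set.range p ∧ (desc T w).Finite}

/-- `projTo T p w v`: the projection `℘_𝕡` sends `w` to `v` (fixing `T^𝕡`, and sending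
any other node to its highest ancestor on `𝕡`). -/
def projTo (T : Set Word) (p : ℕ → Word) (w v : Word) : Prop :=
  (w ∈ endTree T p ∧ v = w) ∨
  (w ∉ endTree T p ∧ v ∈ Set.range p ∧ v <+: w ∧
    ∀ v' ∈ Set.range p, v' <+: w → v' <+: v)

/-- The projected transition matrix `U^𝕡` on `T^𝕡`. -/
noncomputable def projMat (T : Set Word) (p : ℕ → Word) (U : Word → Word → ℝ)
    (u v : Word) : ℝ :=
  ∑' w : {w : Word // w ∈ T ∧ projTo T p w v}, U u (w : Word)

/-- Longest common prefix of two words. -/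
def lcp : Word → Word → Word
  | a :: as, b :: bs => if a = b then a :: lcp as bs else []
  | _, _ => []

/-- Graph distance on the tree. -/
def treeDist (u v : Word) : ℕ :=
  (u.length - (lcp u v).length) + (v.length - (lcp u v).length)

/-- A first-return path from `w` to the set `B`. -/
def IsReturnPath (T : Set Word) (B : Set Word) (w : Word) (γ : List Word) : Prop :=
  2 ≤ γ.length ∧ γ.head? = some w ∧ (∀ x ∈ γ, x ∈ T) ∧
  (∀ k, 0 < k → k < γ.length - 1 → γ.getD k [] ∉ B) ∧
  ∃ z ∈ B, γ.getLast? = some z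

open Classical in
/-- `expReturn T U B w`: the expected first-return time from `w` to `B`, set to `∞`
when return to `B` is not almost sure. -/
noncomputable def expReturn (T : Set Word) (U : Word → Word → ℝ) (B : Set Word)
    (w : Word) : ℝ≥0∞ :=
  if (∑' γ : {γ : List Word // IsReturnPath T B w γ}, wgt U γ.1) = 1 then
    ∑' γ : {γ : List Word // IsReturnPath T B w γ},
      ((γ.1.length - 1 : ℕ) : ℝ≥0∞) * ENNReal.ofReal (wgt U γ.1)
  else ⊤

/-- `P(T)`: nodes with infinitely many descendants (union of the ends of `T`). -/
def Ptree (T : Set Word) : Set Word := {u | u ∈ T ∧ (desc T u).Infinite}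

/-- `Q(T) = 1 + ∑_{u ∈ P(T)} (|c_{P(T)}(u)| - 1)`, valued in `ℝ≥0∞`. -/
noncomputable def Qval (T : Set Word) : ℝ≥0∞ :=
  1 + ∑' u : Ptree T, (((children (Ptree T) (u : Word)).ncard - 1 : ℕ) : ℝ≥0∞)

/-- Complex version of `hMat`, with `λ` on the diagonal: `(λ·Id - ᵘU)^{(u)}`. -/
noncomputable def hMatC (T : Set Word) (U : Word → Word → ℝ) (lam : ℂ) (u : Word) :
    Matrix (Fin u.length) (Fin u.length) ℂ :=
  Matrix.of fun i j =>
    (if i = j then lam else 0) -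
      (if (i : ℕ) ≤ (j : ℕ) + 1 then
        ((descWeight T U (u.take i) (u.take j) : ℝ) : ℂ) -
          ((descWeight T U (u.take i) (u.take ((j : ℕ) + 1)) : ℝ) : ℂ)
       else 0)

/-- `π^{(λ)}(u) = det((λ·Id - ᵘU)^{(u)}) / ∏_{∅ ≠ v ⪯ u} U(v, p(v))`. -/
noncomputable def piLam (T : Set Word) (U : Word → Word → ℝ) (lam : ℂ) (u : Word) : ℂ :=
  (hMatC T U lam u).det /
    ∏ k ∈ Finset.range u.length, ((U (u.take (k + 1)) (u.take k) : ℝ) : ℂ)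

/-- The measure `π̄` of a random walk: `π̄(u) = ∏_j M(u[j-1],u[j]) / M(u[j],u[j-1])`. -/
noncomputable def rwInv (M : Word → Word → ℝ) (u : Word) : ℝ :=
  ∏ k ∈ Finset.range u.length, (M (u.take k) (u.take (k + 1)) / M (u.take (k + 1)) (u.take k))

lemma strict_prefix_dropLast {v w : Word} (h : v <+: w) (hne : v ≠ w) :
    v <+: w.dropLast := by
  obtain ⟨t, rfl⟩ := h
  have ht : t ≠ [] := by rintro rfl; simp at hne
  rw [List.dropLast_append_of_ne_nil ht]
  exact List.prefix_append _ _

def StepR (T : Set Word) (U : Word → Word → ℝ) (u v : Word) : Prop :=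
  v ∈ T ∧ 0 < U u v

lemma reach_of_rtg {T : Set Word} {U : Word → Word → ℝ} {u v : Word}
    (hu : u ∈ T) (h : Relation.ReflTransGen (StepR T U) u v) :
    ∃ (n : ℕ) (x : ℕ → Word),
      x 0 = u ∧ x n = v ∧ (∀ k ≤ n, x k ∈ T) ∧ ∀ k < n, 0 < U (x k) (x (k + 1)) := by
  induction h with
  | refl => exact ⟨0, fun _ => u, rfl, rfl, fun k _ => hu, fun k hk => by omega⟩
  | tail _ hbc ih =>
    obtain ⟨n, x, hx0, hxn, hxT, hxU⟩ := ih
    rename_i b c _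
    refine ⟨n + 1, fun k => if k ≤ n then x k else c, by simp [hx0], by simp, ?_, ?_⟩
    · intro k hk
      by_cases h : k ≤ n
      · simpa [h] using hxT k h
      · simpa [h] using hbc.1
    · intro k hk
      by_cases h : k < n
      · simpa [Nat.le_of_lt h, Nat.succ_le_of_lt h] using hxU k h
      · have hkn : k = n := by omega
        subst hkn
        simpa [hxn] using hbc.2

lemma rtg_up {T : Set Word} {U : Word → Word → ℝ}
    (hpref : ∀ u ∈ T, ∀ v : Word, v <+: u → v ∈ T)
    (ha : ∀ u ∈ T, u ≠ [] → 0 < U u (par u)) :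
    ∀ (n : ℕ) (w : Word), w.length ≤ n → w ∈ T → ∀ v, v <+: w →
      Relation.ReflTransGen (StepR T U) w v := by
  intro n
  induction n with
  | zero =>
    intro w hw _ v hv
    have : w = [] := List.eq_nil_of_length_eq_zero (Nat.le_zero.mp hw)
    subst this
    have : v = [] := List.prefix_nil.mp hv
    subst this; exact Relation.ReflTransGen.refl
  | succ n ih =>
    intro w hwlen hwT v hv
    by_cases hwv : w = v
    · subst hwv; exact Relation.ReflTransGen.refl
    · have hwne : w ≠ [] := by
        rintro rfl
        exact hwv (List.prefix_nil.mp hv).symm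
      have hparT : par w ∈ T := hpref w hwT _ (List.dropLast_prefix w)
      have hstep : StepR T U w (par w) := ⟨hparT, ha w hwT hwne⟩
      have hvpar : v <+: par w := strict_prefix_dropLast hv (Ne.symm hwv)
      have hlen : (par w).length ≤ n := by
        have := (List.length_dropLast : (List.dropLast w).length = w.length - 1)
        have : (par w).length = w.length - 1 := this
        omega
      exact Relation.ReflTransGen.head hstep (ih (par w) hlen hparT v hvpar)

theorem aud_irreducible_iff (T : Set Word) (hT : IsTree T) (U : Word → Word → ℝ)
    (hM : IsTransMatrix T U) (hA : IsAUD T U) :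
    IrreducibleOn T U ↔
      ((∀ u ∈ T, u ≠ [] → 0 < U u (par u)) ∧
       (∀ v ∈ T, v ≠ [] → ∃ u ∈ T, u <+: v ∧ u ≠ v ∧ ∃ w ∈ desc T v, 0 < U u w)) := by
  classical
  obtain ⟨hroot, hpref, _⟩ := hT
  constructor
  · intro hirr
    constructor
    · -- (a)
      intro u hu hne
      obtain ⟨n, x, hx0, hxn, hxT, hxU⟩ := hirr u hu [] hroot
      have hex : ∃ k, k ≤ n ∧ x k ∉ desc T u := by
        refine ⟨n, le_refl n, ?_⟩
        rw [hxn]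
        rintro ⟨-, hpre⟩
        exact hne (List.prefix_nil.mp hpre)
      let k := Nat.find hex
      have hspec : k ≤ n ∧ x k ∉ desc T u := Nat.find_spec hex
      have hkpos : 0 < k := by
        rcases Nat.eq_zero_or_pos k with h0 | h; swap; · exact h
        exfalso
        have := hspec.2
        rw [h0, hx0] at this
        exact this ⟨hu, List.prefix_refl u⟩
      have hprev : x (k - 1) ∈ desc T u := by
        by_contra hc
        have := Nat.find_min hex (m := k - 1) (by omega)
        exact this ⟨by omega, hc⟩
      have hstep : 0 < U (x (k - 1)) (x (k - 1 + 1)) := hxU (k - 1) (by omega)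
      have hk1 : k - 1 + 1 = k := by omega
      rw [hk1] at hstep
      have hxkT : x k ∈ T := hxT k hspec.1
      rcases hA (x (k - 1)) hprev.1 (x k) hxkT hstep with hpar | hdesc
      · by_cases heq : x (k - 1) = u
        · rw [heq] at hstep hpar
          rw [hpar] at hstep
          exact hstep
        · exfalso
          apply hspec.2
          refine ⟨hxkT, ?_⟩
          rw [hpar]
          exact strict_prefix_dropLast hprev.2 (Ne.symm heq)
      · exact absurd ⟨hxkT, hprev.2.trans hdesc.2⟩ hspec.2
    · -- (b)
      intro v hv hvne
      obtain ⟨n, x, hx0, hxn, hxT, hxU⟩ := hirr [] hroot v hv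
      have hex : ∃ k, k ≤ n ∧ x k ∈ desc T v := ⟨n, le_refl n, by rw [hxn]; exact ⟨hv, List.prefix_refl v⟩⟩
      let k := Nat.find hex
      have hspec : k ≤ n ∧ x k ∈ desc T v := Nat.find_spec hex
      have hkpos : 0 < k := by
        rcases Nat.eq_zero_or_pos k with h0 | h; swap; · exact h
        exfalso
        have := hspec.2
        rw [h0, hx0] at this
        exact hvne (List.prefix_nil.mp this.2)
      have hprev : x (k - 1) ∉ desc T v := by
        intro hc
        have := Nat.find_min hex (m := k - 1) (by omega)
        exact this ⟨by omega, hc⟩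
      have hprevT : x (k - 1) ∈ T := hxT (k - 1) (by omega)
      have hstep : 0 < U (x (k - 1)) (x (k - 1 + 1)) := hxU (k - 1) (by omega)
      have hk1 : k - 1 + 1 = k := by omega
      rw [hk1] at hstep
      have hxkT : x k ∈ T := hxT k hspec.1
      rcases hA (x (k - 1)) hprevT (x k) hxkT hstep with hpar | hdesc
      · exfalso
        apply hprev
        refine ⟨hprevT, ?_⟩
        have : x k <+: x (k - 1) := by rw [hpar]; exact List.dropLast_prefix _
        exact hspec.2.2.trans this
      · rcases List.prefix_or_prefix_of_prefix hdesc.2 hspec.2.2 with h1 | h2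
        · refine ⟨x (k - 1), hprevT, h1, ?_, x k, hspec.2, hstep⟩
          intro heq
          rw [heq] at hprev
          exact hprev ⟨hv, List.prefix_refl _⟩
        · exact absurd ⟨hprevT, h2⟩ hprev
  · rintro ⟨ha, hb⟩ u hu v hv
    have hup : ∀ w ∈ T, ∀ z, z <+: w → Relation.ReflTransGen (StepR T U) w z :=
      fun w hw z hz => rtg_up hpref ha w.length w (le_refl _) hw z hz
    have hdown : ∀ (n : ℕ) (v : Word), v.length ≤ n → v ∈ T →
        Relation.ReflTransGen (StepR T U) [] v := by
      intro n
      induction n with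
      | zero =>
        intro v hvlen _
        have : v = [] := List.eq_nil_of_length_eq_zero (Nat.le_zero.mp hvlen)
        subst this; exact Relation.ReflTransGen.refl
      | succ n ih =>
        intro v hvlen hvT
        by_cases hvnil : v = []
        · subst hvnil; exact Relation.ReflTransGen.refl
        · obtain ⟨a, haT, hapre, hane, w, hw, hUaw⟩ := hb v hvT hvnil
          have halen : a.length ≤ n := by
            have h1 : a.length ≤ v.length := hapre.length_le
            have h2 : a.length ≠ v.length := fun h => hane (hapre.eq_of_length h)
            omega
          have h1 : Relation.ReflTransGen (StepR T U) [] a := ih a halen haT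
          have h2 : Relation.ReflTransGen (StepR T U) a w :=
            Relation.ReflTransGen.single ⟨hw.1, hUaw⟩
          have h3 : Relation.ReflTransGen (StepR T U) w v := hup w hw.1 v hw.2
          exact (h1.trans h2).trans h3
    have h1 : Relation.ReflTransGen (StepR T U) u [] :=
      hup u hu [] (List.nil_prefix)
    have h2 : Relation.ReflTransGen (StepR T U) [] v :=
      hdown v.length v (le_refl _) hv
    exact reach_of_rtg hu (h1.trans h2)
end

section
/- Let T be a rooted locally finite tree and D an almost lower-directed (ALD) transition matrix on T. Then D is irreducible if and only if both of the following hold: (a) for every node u ≠ ∅ one has D(p(u), u) > 0, and (b) for every node v ≠ ∅ there exist a descendant w ∈ T_v of v and a strict ancestor u of v (u ∈ [[∅,v]], u ≠ v) such that D(w, u) > 0. -/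
open scoped BigOperators ENNReal

/-- Reachability via positive transitions, staying in `T`. -/
def ReachW (T : Set Word) (D : Word → Word → ℝ) (u v : Word) : Prop :=
  ∃ (n : ℕ) (x : ℕ → Word),
    x 0 = u ∧ x n = v ∧ (∀ k ≤ n, x k ∈ T) ∧ ∀ k < n, 0 < D (x k) (x (k + 1))

lemma reachW_refl (T : Set Word) (D : Word → Word → ℝ) {u : Word} (hu : u ∈ T) :
    ReachW T D u u :=
  ⟨0, fun _ => u, rfl, rfl, fun _ _ => hu, fun k hk => absurd hk (Nat.not_lt_zero k)⟩

lemma reachW_trans (T : Set Word) (D : Word → Word → ℝ) {u v w : Word}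
    (h1 : ReachW T D u v) (h2 : ReachW T D v w) : ReachW T D u w := by
  obtain ⟨n, x, hx0, hxn, hxT, hxD⟩ := h1
  obtain ⟨m, y, hy0, hym, hyT, hyD⟩ := h2
  refine ⟨n + m, fun k => if k ≤ n then x k else y (k - n), ?_, ?_, ?_, ?_⟩
  · simp [hx0]
  · by_cases h : n + m ≤ n
    · have hm : m = 0 := by omega
      simp only [h, if_pos]
      rw [show n + m = n by omega, hxn, ← hy0, show (0:ℕ) = m by omega, hym]
    · simp only [h, if_neg, not_false_iff]
      rw [show n + m - n = m by omega, hym]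
  · intro k hk
    by_cases h : k ≤ n
    · simpa [h] using hxT k h
    · simp only [h, if_neg, not_false_iff]
      exact hyT (k - n) (by omega)
  · intro k hk
    by_cases h1 : k + 1 ≤ n
    · have h2 : k ≤ n := by omega
      simpa [h1, h2] using hxD k (by omega)
    · by_cases h2 : k ≤ n
      · have hkn : k = n := by omega
        simp only [h1, h2, if_pos, if_neg, not_false_iff]
        rw [show k + 1 - n = 1 by omega, hkn, hxn, ← hy0]
        exact hyD 0 (by omega)
      · simp only [h1, h2, if_neg, not_false_iff]
        rw [show k + 1 - n = (k - n) + 1 by omega]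
        exact hyD (k - n) (by omega)

lemma prefix_total_of_prefix {a b c : Word} (h1 : a <+: c) (h2 : b <+: c) :
    a <+: b ∨ b <+: a := by
  rcases le_total a.length b.length with h | h
  · exact Or.inl (List.prefix_of_prefix_length_le h1 h2 h)
  · exact Or.inr (List.prefix_of_prefix_length_le h2 h1 h)

lemma reachW_step (T : Set Word) (D : Word → Word → ℝ) {u v : Word}
    (hu : u ∈ T) (hv : v ∈ T) (h : 0 < D u v) : ReachW T D u v := by
  refine ⟨1, fun k => if k = 0 then u else v, rfl, rfl, ?_, ?_⟩
  · intro k _; by_cases h0 : k = 0 <;> simp [h0, hu, hv]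
  · intro k hk
    interval_cases k
    simpa using h

/-- If every non-root node is reached positively from its parent, then every
node reaches each of its descendants. -/
lemma reachW_of_prefix (T : Set Word) (D : Word → Word → ℝ) (hT : IsTree T)
    (ha : ∀ u ∈ T, u ≠ [] → 0 < D (par u) u) :
    ∀ (n : ℕ) (v w : Word), w.length = n → w ∈ T → v <+: w → ReachW T D v w := by
  intro n
  induction n using Nat.strong_induction_on with
  | _ n ih =>
    intro v w hlen hwT hvw
    by_cases hvw' : v = w
    · exact hvw' ▸ reachW_refl T D (hvw' ▸ hwT)
    · have hlt : v.length < w.length :=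
        lt_of_le_of_ne hvw.length_le (fun h => hvw' (List.IsPrefix.eq_of_length hvw h))
      have hne : w ≠ [] := by
        intro h; rw [h] at hlt; simp at hlt
      have hdT : w.dropLast ∈ T := hT.2.1 w hwT _ (List.dropLast_prefix w)
      have hpref : v <+: w.dropLast :=
        List.prefix_of_prefix_length_le hvw (List.dropLast_prefix w)
          (by rw [List.length_dropLast]; omega)
      have hrec : ReachW T D v w.dropLast :=
        ih w.dropLast.length (by rw [List.length_dropLast]; omega) v _ rfl hdT hpref
      exact reachW_trans T D hrec (reachW_step T D hdT hwT (ha w hwT hne))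

theorem ald_irreducible_iff (T : Set Word) (hT : IsTree T) (D : Word → Word → ℝ)
    (hM : IsTransMatrix T D) (hA : IsALD T D) :
    IrreducibleOn T D ↔
      ((∀ u ∈ T, u ≠ [] → 0 < D (par u) u) ∧
       (∀ v ∈ T, v ≠ [] → ∃ w ∈ desc T v, ∃ u ∈ T, u <+: v ∧ u ≠ v ∧ 0 < D w u)) := by
  classical
  constructor
  · intro hirr
    constructor
    · -- (a)
      intro u huT hune
      have hpT : par u ∈ T := hT.2.1 u huT _ (List.dropLast_prefix u)
      obtain ⟨n, x, hx0, hxn, hxT, hxD⟩ := hirr (par u) hpT u huT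
      have hex : ∃ k, k ≤ n ∧ u <+: x k := ⟨n, le_refl n, hxn ▸ List.prefix_refl u⟩
      set k0 := Nat.find hex with hk0def
      obtain ⟨hk0n, hk0p⟩ := Nat.find_spec hex
      rw [← hk0def] at hk0n hk0p
      have hk0pos : 0 < k0 := by
        rcases Nat.eq_zero_or_pos k0 with h | h
        · exfalso
          have hp : u <+: x 0 := h ▸ hk0p
          rw [hx0] at hp
          have := hp.length_le
          have hlen : (par u).length = u.length - 1 := List.length_dropLast
          have : 0 < u.length := List.length_pos_iff.mpr hune
          omega
        · exact h
      have hprev : ¬ u <+: x (k0 - 1) := by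
        intro hp
        exact Nat.find_min hex (show k0 - 1 < k0 by omega) ⟨by omega, hp⟩
      have e : k0 - 1 + 1 = k0 := by omega
      have hstep : 0 < D (x (k0 - 1)) (x k0) := by
        have := hxD (k0 - 1) (by omega)
        rwa [e] at this
      rcases hA (x (k0 - 1)) (hxT _ (by omega)) (x k0) (hxT _ hk0n) hstep with hc | hanc
      · obtain ⟨_, i, heq⟩ := hc
        by_cases hequ : u = x k0
        · have hpar : par u = x (k0 - 1) := by
            rw [hequ, heq, par, List.dropLast_concat]
          rw [hpar, hequ]
          exact hstep
        · exfalso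
          apply hprev
          have hp : u <+: x (k0 - 1) ++ [i] := heq ▸ hk0p
          refine List.prefix_of_prefix_length_le hp (List.prefix_append _ _) ?_
          have h1 := hp.length_le
          have h2 : u.length ≠ (x (k0 - 1) ++ [i]).length := by
            intro h
            exact hequ (heq ▸ List.IsPrefix.eq_of_length hp (heq ▸ h))
          simp only [List.length_append, List.length_singleton] at h1 h2 ⊢
          omega
      · exact absurd (hk0p.trans hanc) hprev
    · -- (b)
      intro v hvT hvne
      obtain ⟨n, x, hx0, hxn, hxT, hxD⟩ := hirr v hvT [] hT.1
      have hex : ∃ k, k ≤ n ∧ ¬ v <+: x k := by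
        refine ⟨n, le_refl n, ?_⟩
        rw [hxn]
        intro h
        exact hvne (List.prefix_nil.mp h)
      set k0 := Nat.find hex with hk0def
      obtain ⟨hk0n, hk0p⟩ := Nat.find_spec hex
      rw [← hk0def] at hk0n hk0p
      have hk0pos : 0 < k0 := by
        rcases Nat.eq_zero_or_pos k0 with h | h
        · exfalso
          apply hk0p
          rw [h, hx0]
        · exact h
      have hprev : v <+: x (k0 - 1) := by
        by_contra hp
        exact Nat.find_min hex (show k0 - 1 < k0 by omega) ⟨by omega, hp⟩
      have e : k0 - 1 + 1 = k0 := by omega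
      have hstep : 0 < D (x (k0 - 1)) (x k0) := by
        have := hxD (k0 - 1) (by omega)
        rwa [e] at this
      rcases hA (x (k0 - 1)) (hxT _ (by omega)) (x k0) (hxT _ hk0n) hstep with hc | hanc
      · obtain ⟨_, i, heq⟩ := hc
        exact absurd (hprev.trans (heq ▸ List.prefix_append _ _)) hk0p
      · have hcomp : x k0 <+: v := by
          rcases prefix_total_of_prefix hprev hanc with h | h
          · exact absurd h hk0p
          · exact h
        refine ⟨x (k0 - 1), ⟨hxT _ (by omega), hprev⟩, x k0, hxT _ hk0n, hcomp, ?_, hstep⟩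
        intro h
        exact hk0p (h ▸ List.prefix_refl _)
  · rintro ⟨ha, hb⟩ u huT v hvT
    have hroot : ∀ (m : ℕ) (z : Word), z.length = m → z ∈ T → ReachW T D z [] := by
      intro m
      induction m using Nat.strong_induction_on with
      | _ m ih =>
        intro z hlen hzT
        by_cases hz : z = []
        · subst hz
          exact reachW_refl T D hT.1
        · obtain ⟨w, ⟨hwT, hzw⟩, a, haT, hav, hane, hDwa⟩ := hb z hzT hz
          have h1 : ReachW T D z w := reachW_of_prefix T D hT ha w.length z w rfl hwT hzw
          have h2 : ReachW T D w a := reachW_step T D hwT haT hDwa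
          have halen : a.length < m := by
            have := hav.length_le
            have hne : a.length ≠ z.length := by
              intro h
              exact hane (List.IsPrefix.eq_of_length hav h)
            omega
          have h3 : ReachW T D a [] := ih a.length halen a rfl haT
          exact reachW_trans T D (reachW_trans T D h1 h2) h3
    have h1 : ReachW T D u [] := hroot u.length u rfl huT
    have h2 : ReachW T D [] v :=
      reachW_of_prefix T D hT ha v.length [] v rfl hvT (List.nil_prefix)
    exact reachW_trans T D h1 h2
end

section
/- Let U be an irreducible AUD transition matrix on a finite or infinite rooted locally finite tree T, and let π be its h-invariant measure. Then π(u) > 0 for every u ∈ T, and π is an invariant measure of U: for every u ∈ T, π(u) = ∑_{v ∈ [[∅,u]]} π(v) U(v,u) + ∑_{c ∈ c_T(u)} π(c) U(c,u) (equivalently π(u) = ∑_{v∈T} π(v) U(v,u), since for an AUD matrix only ancestors and children of u can make a transition to u). -/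
open scoped BigOperators ENNReal

section Aux

variable {T : Set Word} {U : Word → Word → ℝ}

lemma take_mem (hT : IsTree T) {u : Word} (hu : u ∈ T) (j : ℕ) : u.take j ∈ T :=
  hT.2.1 u hu _ (List.take_prefix _ _)

lemma par_take {u : Word} {k : ℕ} (hk : k < u.length) : par (u.take (k + 1)) = u.take k := by
  unfold par
  rw [List.dropLast_eq_take, List.length_take, List.take_take]
  congr 1
  omega

lemma prefix_dropLast {b a : Word} (h : b <+: a) (hne : b ≠ a) : b <+: par a := by
  have hlt : b.length < a.length := by
    rcases lt_or_eq_of_le h.length_le with h' | h'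
    · exact h'
    · exact absurd (List.IsPrefix.eq_of_length h h') hne
  rw [List.prefix_iff_eq_take] at h ⊢
  rw [par, List.dropLast_eq_take, List.take_take]
  have : min b.length (a.length - 1) = b.length := by omega
  rw [this]
  exact h

lemma summable_g (hM : IsTransMatrix T U) {a : Word} (ha : a ∈ T) :
    Summable (T.indicator (U a)) :=
  summable_subtype_iff_indicator.mp (hM.2 a ha).summable

lemma g_nonneg (hM : IsTransMatrix T U) {a : Word} (ha : a ∈ T) (w : Word) :
    0 ≤ T.indicator (U a) w := by
  by_cases hw : w ∈ T
  · rw [Set.indicator_of_mem hw]; exact hM.1 a ha w hw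
  · rw [Set.indicator_of_notMem hw]

lemma desc_subset (b : Word) : desc T b ⊆ T := fun w hw => hw.1

lemma descWeight_eq (a b : Word) :
    descWeight T U a b = ∑' w, (desc T b).indicator (T.indicator (U a)) w := by
  rw [descWeight, tsum_subtype]
  congr 1
  rw [Set.indicator_indicator, Set.inter_eq_self_of_subset_left (desc_subset b)]

lemma summable_desc (hM : IsTransMatrix T U) {a : Word} (ha : a ∈ T) (s : Set Word) :
    Summable (s.indicator (T.indicator (U a))) :=
  (summable_g hM ha).indicator s

lemma descWeight_nonneg (hM : IsTransMatrix T U) {a : Word} (ha : a ∈ T) (b : Word) :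
    0 ≤ descWeight T U a b := by
  rw [descWeight_eq]
  exact tsum_nonneg fun w => Set.indicator_nonneg (fun w _ => g_nonneg hM ha w) w

lemma single_le_descWeight (hM : IsTransMatrix T U) {a : Word} (ha : a ∈ T) {b w : Word}
    (hw : w ∈ desc T b) : U a w ≤ descWeight T U a b := by
  rw [descWeight_eq]
  have h := Summable.le_tsum (summable_desc hM ha (desc T b)) w
    (fun j _ => Set.indicator_nonneg (fun w _ => g_nonneg hM ha w) j)
  calc U a w = (desc T b).indicator (T.indicator (U a)) w := by
        rw [Set.indicator_of_mem hw, Set.indicator_of_mem hw.1]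
    _ ≤ _ := h

lemma U_eq_zero (hM : IsTransMatrix T U) (hA : IsAUD T U) {a : Word} (ha : a ∈ T) {w : Word}
    (hw : w ∈ T) (h1 : w ≠ par a) (h2 : w ∉ desc T a) : U a w = 0 := by
  by_contra h
  have hpos : 0 < U a w := lt_of_le_of_ne (hM.1 a ha w hw) (Ne.symm h)
  rcases hA a ha w hw hpos with h' | h' <;> tauto

lemma desc_root : desc T [] = T := by
  ext w; simp [desc, List.nil_prefix]

lemma descWeight_root (hM : IsTransMatrix T U) {a : Word} (ha : a ∈ T) :
    descWeight T U a [] = 1 := by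
  rw [descWeight_eq, desc_root, Set.indicator_indicator, Set.inter_self]
  exact (hasSum_subtype_iff_indicator.mp (hM.2 a ha)).tsum_eq

lemma lemA (hT : IsTree T) (hM : IsTransMatrix T U) (hA : IsAUD T U) {a b : Word}
    (ha : a ∈ T) (hb : b <+: a) (hne : b ≠ a) :
    descWeight T U a b = U a (par a) + descWeight T U a a := by
  have hane : a ≠ [] := by rintro rfl; exact hne (List.prefix_nil.mp hb)
  have hpar_pre : par a <+: a := List.dropLast_prefix a
  have hpar_mem : par a ∈ T := hT.2.1 a ha _ hpar_pre
  have hpar_desc_b : par a ∈ desc T b := ⟨hpar_mem, prefix_dropLast hb hne⟩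
  have hlen_par : (par a).length < a.length := by
    rw [par, List.length_dropLast]
    cases a with
    | nil => exact absurd rfl hane
    | cons x l => simp
  have hpar_not_desc : par a ∉ desc T a := by
    rintro ⟨-, hp⟩
    exact absurd hp.length_le (by omega)
  set g := T.indicator (U a) with hg
  have key : ∀ w, (desc T b).indicator g w
      = ({par a} : Set Word).indicator g w + (desc T a).indicator g w := by
    intro w
    by_cases hw1 : w = par a
    · subst hw1
      rw [Set.indicator_of_mem hpar_desc_b, Set.indicator_of_mem (Set.mem_singleton (par a)),
        Set.indicator_of_notMem hpar_not_desc, add_zero]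
    · rw [Set.indicator_of_notMem (show w ∉ ({par a} : Set Word) by simpa using hw1), zero_add]
      by_cases hw2 : w ∈ desc T a
      · rw [Set.indicator_of_mem hw2,
          Set.indicator_of_mem (show w ∈ desc T b from ⟨hw2.1, hb.trans hw2.2⟩)]
      · rw [Set.indicator_of_notMem hw2]
        by_cases hw3 : w ∈ desc T b
        · rw [Set.indicator_of_mem hw3, hg, Set.indicator_of_mem hw3.1]
          exact U_eq_zero hM hA ha hw3.1 hw1 hw2
        · rw [Set.indicator_of_notMem hw3]
  rw [descWeight_eq, descWeight_eq, tsum_congr key,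
    Summable.tsum_add ((summable_g hM ha).indicator _) ((summable_g hM ha).indicator _)]
  congr 1
  rw [tsum_eq_single (par a) (fun w hw => Set.indicator_of_notMem (by simpa using hw) g),
    Set.indicator_of_mem (Set.mem_singleton _), hg, Set.indicator_of_mem hpar_mem]

lemma one_eq (hT : IsTree T) (hM : IsTransMatrix T U) (hA : IsAUD T U) {a : Word}
    (ha : a ∈ T) (hane : a ≠ []) :
    (1 : ℝ) = U a (par a) + descWeight T U a a := by
  rw [← descWeight_root hM ha]
  exact lemA hT hM hA ha List.nil_prefix (Ne.symm hane)

end Aux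
section Aux2

variable {T : Set Word} {U : Word → Word → ℝ}

lemma summable_finsum {ι : Type*} (f : ι → Word → ℝ) (s : Finset ι)
    (h : ∀ i ∈ s, Summable (f i)) : Summable (fun x => ∑ i ∈ s, f i x) := by
  classical
  induction s using Finset.induction with
  | empty => simpa using summable_zero
  | insert a t hx ih =>
    simp only [Finset.sum_insert hx]
    exact ((h a (by simp)).add (ih (fun i hi => h i (by simp [hi]))))

lemma lemB (hT : IsTree T) (hM : IsTransMatrix T U) {a b : Word} (ha : a ∈ T) (hb : b ∈ T) :
    descWeight T U a b
      = U a b + ∑ i ∈ (hT.2.2 b hb).toFinset, descWeight T U a (b ++ [i]) := by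
  classical
  set g := T.indicator (U a) with hg
  set chS := (hT.2.2 b hb).toFinset with hchS
  have hsub : ∀ i, desc T (b ++ [i]) ⊆ desc T b := by
    rintro i w ⟨hw1, hw2⟩
    exact ⟨hw1, (List.prefix_append b [i]).trans hw2⟩
  have key : ∀ w, (desc T b).indicator g w
      = ({b} : Set Word).indicator g w + ∑ i ∈ chS, (desc T (b ++ [i])).indicator g w := by
    intro w
    by_cases hw : w ∈ desc T b
    · by_cases hwb : w = b
      · subst hwb
        rw [Set.indicator_of_mem hw, Set.indicator_of_mem (Set.mem_singleton w)]
        have : ∀ i ∈ chS, (desc T (w ++ [i])).indicator g w = 0 := by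
          intro i _
          apply Set.indicator_of_notMem
          rintro ⟨-, hp⟩
          have := hp.length_le
          simp at this
        rw [Finset.sum_congr rfl this, Finset.sum_const_zero, add_zero]
      · obtain ⟨r, hr⟩ := hw.2
        have hrne : r ≠ [] := by rintro rfl; exact hwb (by simp [← hr])
        obtain ⟨i, t, rfl⟩ := List.exists_cons_of_ne_nil hrne
        have hwi : w ∈ desc T (b ++ [i]) := by
          refine ⟨hw.1, ⟨t, ?_⟩⟩
          rw [← hr]; simp
        have hiS : i ∈ chS := by
          rw [hchS, Set.Finite.mem_toFinset]
          exact hT.2.1 w hw.1 _ hwi.2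
        rw [Set.indicator_of_mem hw,
          Set.indicator_of_notMem (show w ∉ ({b} : Set Word) by simpa using hwb), zero_add]
        rw [Finset.sum_eq_single_of_mem i hiS, Set.indicator_of_mem hwi]
        intro j _ hj
        apply Set.indicator_of_notMem
        rintro ⟨-, hp⟩
        apply hj
        have h2 := hwi.2
        have h1 : [j] <+: [i] ∨ [i] <+: [j] := by
          rcases List.prefix_or_prefix_of_prefix hp h2 with h | h
          · exact Or.inl ((List.prefix_append_right_inj b).mp h)
          · exact Or.inr ((List.prefix_append_right_inj b).mp h)
        rcases h1 with ⟨s, hs⟩ | ⟨s, hs⟩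
        · cases s with
          | nil => simpa using hs
          | cons x xs => simp at hs
        · cases s with
          | nil => exact (show i = j by simpa using hs).symm
          | cons x xs => simp at hs
    · rw [Set.indicator_of_notMem hw,
        Set.indicator_of_notMem (show w ∉ ({b} : Set Word) by
          simp only [Set.mem_singleton_iff]
          rintro rfl
          exact hw ⟨hb, List.prefix_refl _⟩), zero_add]
      symm
      apply Finset.sum_eq_zero
      intro i _
      exact Set.indicator_of_notMem (fun hwi => hw (hsub i hwi)) g
  rw [descWeight_eq, tsum_congr key,
    Summable.tsum_add ((summable_g hM ha).indicator _)
      (summable_finsum _ _ (fun i _ => (summable_g hM ha).indicator _)),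
    Summable.tsum_finsetSum (fun i _ => (summable_g hM ha).indicator _)]
  congr 1
  · rw [tsum_eq_single b (fun w hw => Set.indicator_of_notMem (by simpa using hw) g),
      Set.indicator_of_mem (Set.mem_singleton b), hg, Set.indicator_of_mem hb]
  · exact Finset.sum_congr rfl fun i _ => (descWeight_eq a (b ++ [i])).symm

end Aux2
section Hess

/-- Principal `n × n` minor of an `ℕ`-indexed matrix. -/
noncomputable def pmf (f : ℕ → ℕ → ℝ) (n : ℕ) : ℝ :=
  (Matrix.of fun a b : Fin n => f (a : ℕ) (b : ℕ)).det

lemma pmf_zero (f : ℕ → ℕ → ℝ) : pmf f 0 = 1 := Matrix.det_fin_zero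

lemma pmf_congr {f f' : ℕ → ℕ → ℝ} {n : ℕ}
    (h : ∀ a b, a < n → b < n → f a b = f' a b) : pmf f n = pmf f' n := by
  unfold pmf
  congr 1
  ext a b
  exact h a b a.isLt b.isLt

lemma hess : ∀ (n : ℕ) (f : ℕ → ℕ → ℝ), (∀ i j, j + 1 < i → i ≤ n → f i j = 0) →
    pmf f (n + 1) = ∑ i ∈ Finset.range (n + 1),
      f i n * pmf f i * (-1 : ℝ) ^ (n - i) * ∏ k ∈ Finset.Ico i n, f (k + 1) k := by
  intro n
  induction n with
  | zero =>
    intro f _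
    simp [pmf, Matrix.det_fin_one, pmf_zero]
  | succ n IH =>
    intro f hf
    set A : Matrix (Fin (n + 2)) (Fin (n + 2)) ℝ :=
      Matrix.of fun a b : Fin (n + 2) => f (a : ℕ) (b : ℕ) with hA
    have hlast : (A.submatrix (Fin.last (n + 1)).succAbove
        (Fin.last (n + 1)).succAbove).det = pmf f (n + 1) := by
      unfold pmf
      congr 1
      rw [Fin.succAbove_last]
      ext a b
      simp [hA, Matrix.submatrix]
    have hsa : ∀ b : Fin (n + 1),
        (((((Fin.last n).castSucc : Fin (n + 2))).succAbove b : Fin (n + 2)) : ℕ)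
          = if (b : ℕ) < n then (b : ℕ) else (b : ℕ) + 1 := by
      intro b
      rcases lt_or_ge (b : ℕ) n with h | h
      · rw [Fin.succAbove_of_castSucc_lt]
        · simp [h]
        · simp [Fin.lt_def, h]
      · rw [Fin.succAbove_of_le_castSucc]
        · simp [Nat.not_lt.mpr h]
        · simp [Fin.le_def, h]
    set f' : ℕ → ℕ → ℝ := fun i j => f i (if j < n then j else j + 1) with hf'
    have hB : (A.submatrix (Fin.last (n + 1)).succAbove
        ((((Fin.last n).castSucc : Fin (n + 2))).succAbove)).det = pmf f' (n + 1) := by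
      unfold pmf
      congr 1
      rw [Fin.succAbove_last]
      ext a b
      simp only [Matrix.submatrix_apply, Matrix.of_apply, hA, hf']
      congr 1
      exact hsa b
    have hf'0 : ∀ i j, j + 1 < i → i ≤ n → f' i j = 0 := by
      intro i j h1 h2
      rw [hf']
      by_cases hj : j < n
      · simp only [hj, if_pos]
        exact hf i j h1 (by omega)
      · omega
    have hIH2 : pmf f' (n + 1) = ∑ i ∈ Finset.range (n + 1),
        f i (n + 1) * pmf f i * (-1 : ℝ) ^ (n - i) * ∏ k ∈ Finset.Ico i n, f (k + 1) k := by
      rw [IH f' hf'0]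
      apply Finset.sum_congr rfl
      intro i hi
      rw [Finset.mem_range] at hi
      have e1 : f' i n = f i (n + 1) := by simp [hf']
      have e2 : pmf f' i = pmf f i := by
        apply pmf_congr
        intro a b _ hb
        simp [hf', show b < n by omega]
      have e3 : ∀ k ∈ Finset.Ico i n, f' (k + 1) k = f (k + 1) k := by
        intro k hk
        rw [Finset.mem_Ico] at hk
        simp [hf', hk.2]
      rw [e1, e2, Finset.prod_congr rfl e3]
    have goal_eq : pmf f (n + 2) = A.det := rfl
    rw [goal_eq, Matrix.det_succ_row A (Fin.last (n + 1)), Fin.sum_univ_castSucc,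
      Fin.sum_univ_castSucc]
    have hz : (∑ j : Fin n,
        (-1 : ℝ) ^ ((Fin.last (n + 1) : ℕ) + ((j.castSucc.castSucc : Fin (n + 2)) : ℕ)) *
          A (Fin.last (n + 1)) j.castSucc.castSucc *
          (A.submatrix (Fin.last (n + 1)).succAbove j.castSucc.castSucc.succAbove).det) = 0 := by
      apply Finset.sum_eq_zero
      intro j _
      have : A (Fin.last (n + 1)) j.castSucc.castSucc = 0 := by
        show f (n + 1) ((j.castSucc.castSucc : Fin (n+2)) : ℕ) = 0
        apply hf
        · simp only [Fin.coe_castSucc]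
          omega
        · simp
      rw [this]; ring
    rw [hz, zero_add, hlast, hB, hIH2]
    have hAval1 : A (Fin.last (n + 1)) (Fin.last (n + 1)) = f (n + 1) (n + 1) := by simp [hA]
    have hAval2 : A (Fin.last (n + 1)) ((Fin.last n).castSucc : Fin (n + 2)) = f (n + 1) n := by
      simp [hA]
    rw [hAval1, hAval2]
    simp only [Fin.val_last, Fin.coe_castSucc]
    conv_rhs => rw [Finset.sum_range_succ]
    have hsgn1 : ((-1 : ℝ)) ^ ((n + 1) + n) = -1 := Odd.neg_one_pow ⟨n, by ring⟩
    have hsgn2 : ((-1 : ℝ)) ^ ((n + 1) + (n + 1)) = 1 := Even.neg_one_pow ⟨n + 1, by ring⟩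
    have key2 : ∀ i ∈ Finset.range (n + 1),
        f i (n + 1) * pmf f i * (-1 : ℝ) ^ (n + 1 - i) * ∏ k ∈ Finset.Ico i (n + 1), f (k + 1) k
        = (-1 : ℝ) * (f (n + 1) n *
            (f i (n + 1) * pmf f i * (-1 : ℝ) ^ (n - i) * ∏ k ∈ Finset.Ico i n, f (k + 1) k)) := by
      intro i hi
      rw [Finset.mem_range] at hi
      have h1 : i ≤ n := by omega
      rw [Finset.prod_Ico_succ_top h1, show n + 1 - i = (n - i) + 1 from by omega, pow_succ]
      ring
    rw [Finset.sum_congr rfl key2, ← Finset.mul_sum, ← Finset.mul_sum, hsgn1, hsgn2]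
    simp
end Hess
section MainD

variable {T : Set Word} {U : Word → Word → ℝ}

lemma hMat_det_eq (u : Word) : (hMat T U u).det
    = pmf (fun i j => (if i = j then (1 : ℝ) else 0) -
        (if i ≤ j + 1 then descWeight T U (u.take i) (u.take j)
          - descWeight T U (u.take i) (u.take (j + 1)) else 0)) u.length := by
  unfold pmf hMat
  congr 1
  ext i j
  by_cases h : (i : ℕ) = (j : ℕ)
  · simp [Fin.ext_iff, h]
  · simp [Fin.ext_iff, h]

lemma take_take_eq (u : Word) {a b : ℕ} (h : a ≤ b) : (u.take b).take a = u.take a := by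
  rw [List.take_take]
  congr 1
  omega

lemma take_length_eq {u : Word} {j : ℕ} (hj : j ≤ u.length) : (u.take j).length = j := by
  rw [List.length_take]; omega

lemma take_ne_nil {u : Word} {j : ℕ} (hj : 1 ≤ j) (hj2 : j ≤ u.length) : u.take j ≠ [] := by
  intro h
  have := take_length_eq hj2
  rw [h] at this
  simp at this
  omega

lemma take_prefix_take {u : Word} {a b : ℕ} (h : a ≤ b) : u.take a <+: u.take b := by
  rw [← take_take_eq u h]
  exact List.take_prefix _ _

lemma lemD (hT : IsTree T) (hM : IsTransMatrix T U) (hA : IsAUD T U) :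
    ∀ n : ℕ, ∀ u, u ∈ T → u.length = n → 1 ≤ n →
    (hMat T U u).det = ∑ j ∈ Finset.range n,
      descWeight T U (u.take j) u * (hMat T U (u.take j)).det *
        ∏ k ∈ Finset.Ico j (n - 1), U (u.take (k + 1)) (u.take k) := by
  intro n
  induction n using Nat.strong_induction_on with
  | _ n IH =>
  intro u hu hlen hn
  obtain ⟨m, rfl⟩ : ∃ m, n = m + 1 := ⟨n - 1, by omega⟩
  simp only [Nat.add_sub_cancel]
  set f : ℕ → ℕ → ℝ := fun i j =>
    (if i = j then (1 : ℝ) else 0) -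
      (if i ≤ j + 1 then descWeight T U (u.take i) (u.take j)
        - descWeight T U (u.take i) (u.take (j + 1)) else 0) with hf
  have hf0 : ∀ i j, j + 1 < i → i ≤ m → f i j = 0 := by
    intro i j h1 _
    simp [hf, show ¬ i = j by omega, show ¬ i ≤ j + 1 by omega]
  have hdet : (hMat T U u).det = pmf f (m + 1) := by
    rw [hMat_det_eq, hlen]
  have htop : u.take (m + 1) = u := by rw [← hlen]; exact List.take_length
  have hpm : ∀ i, i ≤ m + 1 → pmf f i = (hMat T U (u.take i)).det := by
    intro i hi
    rw [hMat_det_eq (u.take i), take_length_eq (by omega)]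
    apply pmf_congr
    intro a b ha hb
    simp only [hf]
    rw [take_take_eq u (by omega : a ≤ i), take_take_eq u (by omega : b ≤ i),
      take_take_eq u (by omega : b + 1 ≤ i)]
  have hsub : ∀ k, k < m → f (k + 1) k = -(U (u.take (k + 1)) (u.take k)) := by
    intro k hk
    have hmem : u.take (k + 1) ∈ T := take_mem hT hu _
    have hAA := lemA hT hM hA hmem (take_prefix_take (by omega : k ≤ k + 1))
      (by
        intro h
        have h1 : (u.take k).length = k := take_length_eq (by omega)
        have h2 : (u.take (k + 1)).length = k + 1 := take_length_eq (by omega)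
        rw [h] at h1
        omega)
    have hp : par (u.take (k + 1)) = u.take k := par_take (by omega)
    simp only [hf]
    rw [if_neg (by omega : ¬ k + 1 = k), if_pos (by omega : k + 1 ≤ k + 1), hAA, hp]
    ring
  have hsq : ∀ i : ℕ, ((-1 : ℝ)) ^ (m - i) * ((-1 : ℝ)) ^ (m - i) = 1 := by
    intro i
    rw [← pow_add]
    exact Even.neg_one_pow ⟨m - i, by ring⟩
  have hprod : ∀ i, i ≤ m → ∏ k ∈ Finset.Ico i m, f (k + 1) k
      = (-1 : ℝ) ^ (m - i) * ∏ k ∈ Finset.Ico i m, U (u.take (k + 1)) (u.take k) := by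
    intro i hi
    rw [Finset.prod_congr rfl (fun k hk => hsub k (Finset.mem_Ico.mp hk).2),
      Finset.prod_congr rfl (fun k (hk : k ∈ Finset.Ico i m) =>
        neg_eq_neg_one_mul (U (u.take (k + 1)) (u.take k))),
      Finset.prod_mul_distrib, Finset.prod_const, Nat.card_Ico]
  have hsplit : ∀ i, i ≤ m → f i m = descWeight T U (u.take i) u
      + ((if i = m then (1 : ℝ) else 0) - descWeight T U (u.take i) (u.take m)) := by
    intro i hi
    simp only [hf]
    by_cases him : i = m
    · rw [if_pos him, if_pos (by omega : i ≤ m + 1), htop]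
      ring
    · rw [if_neg him, if_pos (by omega : i ≤ m + 1), htop]
      ring
  -- the cancellation term
  have hzero2 : ∑ i ∈ Finset.range (m + 1),
      ((if i = m then (1 : ℝ) else 0) - descWeight T U (u.take i) (u.take m)) *
        ((hMat T U (u.take i)).det * ∏ k ∈ Finset.Ico i m, U (u.take (k + 1)) (u.take k)) = 0 := by
    rw [Finset.sum_range_succ, if_pos rfl, Finset.Ico_self, Finset.prod_empty, mul_one]
    rcases Nat.eq_zero_or_pos m with rfl | hm1
    · simp only [List.take_zero]
      rw [descWeight_root hM hT.1]
      simp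
    -- m ≥ 1
    have hmm : u.take m ∈ T := take_mem hT hu m
    have hmne : u.take m ≠ [] := take_ne_nil hm1 (by omega)
    have h1m : (1 : ℝ) - descWeight T U (u.take m) (u.take m)
        = U (u.take m) (u.take (m - 1)) := by
      have := one_eq hT hM hA hmm hmne
      have hp : par (u.take m) = u.take (m - 1) := by
        have : m - 1 + 1 = m := by omega
        rw [← this]
        exact par_take (by omega)
      rw [hp] at this
      linarith
    have tt : ∀ j, j ≤ m → (u.take m).take j = u.take j := fun j hj => take_take_eq u hj
    have hDm := IH m (by omega) (u.take m) hmm (take_length_eq (by omega)) hm1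
    have hDm2 : (hMat T U (u.take m)).det = ∑ j ∈ Finset.range m,
        descWeight T U (u.take j) (u.take m) * (hMat T U (u.take j)).det *
          ∏ k ∈ Finset.Ico j (m - 1), U (u.take (k + 1)) (u.take k) := by
      rw [hDm]
      apply Finset.sum_congr rfl
      intro j hj
      rw [Finset.mem_range] at hj
      rw [tt j (by omega)]
      congr 1
      apply Finset.prod_congr rfl
      intro k hk
      rw [Finset.mem_Ico] at hk
      rw [tt (k + 1) (by omega), tt k (by omega)]
    have hIcoTop : ∀ j, j < m → ∏ k ∈ Finset.Ico j m, U (u.take (k + 1)) (u.take k)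
        = (∏ k ∈ Finset.Ico j (m - 1), U (u.take (k + 1)) (u.take k)) *
            U (u.take m) (u.take (m - 1)) := by
      intro j hj
      have hm' : m = (m - 1) + 1 := by omega
      rw [hm', Finset.prod_Ico_succ_top (by omega : j ≤ m - 1)]
      congr 2 <;> omega
    rw [h1m, hDm2, Finset.mul_sum]
    rw [Finset.sum_congr rfl (fun i (hi : i ∈ Finset.range m) => by
      rw [if_neg (by rw [Finset.mem_range] at hi; omega : ¬ i = m),
        hIcoTop i (Finset.mem_range.mp hi)])]
    rw [← Finset.sum_add_distrib]
    apply Finset.sum_eq_zero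
    intro i _
    ring
  -- main computation
  rw [hdet, hess m f hf0]
  have step : ∀ i ∈ Finset.range (m + 1),
      f i m * pmf f i * (-1 : ℝ) ^ (m - i) * ∏ k ∈ Finset.Ico i m, f (k + 1) k
      = descWeight T U (u.take i) u * (hMat T U (u.take i)).det *
          (∏ k ∈ Finset.Ico i m, U (u.take (k + 1)) (u.take k))
        + ((if i = m then (1 : ℝ) else 0) - descWeight T U (u.take i) (u.take m)) *
            ((hMat T U (u.take i)).det * ∏ k ∈ Finset.Ico i m, U (u.take (k + 1)) (u.take k)) := by
    intro i hi
    rw [Finset.mem_range] at hi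
    have hi' : i ≤ m := by omega
    rw [hprod i hi', hpm i (by omega), hsplit i hi']
    have h2 := hsq i
    calc (descWeight T U (u.take i) u
          + ((if i = m then (1 : ℝ) else 0) - descWeight T U (u.take i) (u.take m))) *
            (hMat T U (u.take i)).det * (-1 : ℝ) ^ (m - i) *
            ((-1 : ℝ) ^ (m - i) * ∏ k ∈ Finset.Ico i m, U (u.take (k + 1)) (u.take k))
        = ((descWeight T U (u.take i) u
          + ((if i = m then (1 : ℝ) else 0) - descWeight T U (u.take i) (u.take m))) *
            (hMat T U (u.take i)).det *
            (∏ k ∈ Finset.Ico i m, U (u.take (k + 1)) (u.take k))) *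
            ((-1 : ℝ) ^ (m - i) * (-1 : ℝ) ^ (m - i)) := by ring
      _ = _ := by rw [h2, mul_one]; ring
  rw [Finset.sum_congr rfl step, Finset.sum_add_distrib, hzero2, add_zero]

end MainD
section Chain

variable {T : Set Word} {U : Word → Word → ℝ}

lemma pos_up (hM : IsTransMatrix T U) (hA : IsAUD T U) (hI : IrreducibleOn T U)
    (hT : IsTree T) {v : Word} (hv : v ∈ T) (hne : v ≠ []) : 0 < U v (par v) := by
  classical
  obtain ⟨n, x, hx0, hxn, hmem, hpos⟩ := hI v hv [] hT.1
  have hP : ∃ k, ¬ v <+: x k := ⟨n, by rw [hxn]; intro h; exact hne (List.prefix_nil.mp h)⟩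
  have hk2 : ¬ v <+: x (Nat.find hP) := Nat.find_spec hP
  have hkpos : Nat.find hP ≠ 0 := by
    intro h
    apply hk2
    rw [h, hx0]
  have hk1 : v <+: x (Nat.find hP - 1) :=
    not_not.mp (Nat.find_min hP (show Nat.find hP - 1 < Nat.find hP by omega))
  have hkn : Nat.find hP ≤ n :=
    Nat.find_min' hP (by rw [hxn]; intro h; exact hne (List.prefix_nil.mp h))
  have hstep := hpos (Nat.find hP - 1) (by omega)
  have hee : Nat.find hP - 1 + 1 = Nat.find hP := by omega
  rw [hee] at hstep
  rcases hA (x (Nat.find hP - 1)) (hmem _ (by omega)) (x (Nat.find hP)) (hmem _ hkn) hstep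
    with h | h
  · have hxv : x (Nat.find hP - 1) = v := by
      by_contra hne2
      exact hk2 (h ▸ prefix_dropLast hk1 (fun e => hne2 e.symm))
    rw [hxv, h, hxv] at hstep
    exact hstep
  · exact absurd (hk1.trans h.2) hk2

lemma reach (hT : IsTree T) (hM : IsTransMatrix T U) (hA : IsAUD T U) (hI : IrreducibleOn T U)
    {u : Word} (hu : u ∈ T) (hne : u ≠ []) :
    ∃ j < u.length, 0 < descWeight T U (u.take j) u := by
  classical
  obtain ⟨n, x, hx0, hxn, hmem, hpos⟩ := hI [] hT.1 u hu
  have hP : ∃ k, u <+: x k := ⟨n, by rw [hxn]⟩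
  have hspec : u <+: x (Nat.find hP) := Nat.find_spec hP
  have hkpos : Nat.find hP ≠ 0 := by
    intro h
    rw [h, hx0] at hspec
    exact hne (List.prefix_nil.mp hspec)
  have hk1 : ¬ u <+: x (Nat.find hP - 1) :=
    Nat.find_min hP (show Nat.find hP - 1 < Nat.find hP by omega)
  have hkn : Nat.find hP ≤ n := Nat.find_min' hP (by rw [hxn])
  have hstep := hpos (Nat.find hP - 1) (by omega)
  have hee : Nat.find hP - 1 + 1 = Nat.find hP := by omega
  rw [hee] at hstep
  rcases hA (x (Nat.find hP - 1)) (hmem _ (by omega)) (x (Nat.find hP)) (hmem _ hkn) hstep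
    with h | h
  · have h2 : x (Nat.find hP) <+: x (Nat.find hP - 1) := by
      rw [h]
      exact List.dropLast_prefix _
    exact absurd (hspec.trans h2) hk1
  · rcases List.prefix_or_prefix_of_prefix h.2 hspec with h3 | h3
    · refine ⟨(x (Nat.find hP - 1)).length, ?_, ?_⟩
      · rcases lt_or_eq_of_le h3.length_le with h4 | h4
        · exact h4
        · exact absurd (h3.eq_of_length h4)
            (fun e => hk1 (by rw [e]))
      · have he : u.take (x (Nat.find hP - 1)).length = x (Nat.find hP - 1) :=
          (List.prefix_iff_eq_take.mp h3).symm
        rw [he]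
        calc (0 : ℝ) < U (x (Nat.find hP - 1)) (x (Nat.find hP)) := hstep
          _ ≤ descWeight T U (x (Nat.find hP - 1)) u :=
            single_le_descWeight hM (hmem _ (by omega)) ⟨hmem _ hkn, hspec⟩
    · exact absurd h3 hk1

lemma lemE (hT : IsTree T) (hM : IsTransMatrix T U) (hA : IsAUD T U) (hI : IrreducibleOn T U)
    {u : Word} (hu : u ∈ T) (hne : u ≠ []) :
    hInv T U u * U u (par u)
      = ∑ j ∈ Finset.range u.length, hInv T U (u.take j) * descWeight T U (u.take j) u := by
  have hl1 : 0 < u.length := List.length_pos_iff.mpr hne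
  obtain ⟨m, hlen⟩ : ∃ m, u.length = m + 1 := ⟨u.length - 1, by omega⟩
  have hUpos : ∀ k, k < u.length → 0 < U (u.take (k + 1)) (u.take k) := by
    intro k hk
    have := pos_up hM hA hI hT (take_mem hT hu (k + 1))
      (take_ne_nil (by omega) (by omega))
    rwa [par_take hk] at this
  have hQpos : 0 < ∏ k ∈ Finset.range m, U (u.take (k + 1)) (u.take k) :=
    Finset.prod_pos (fun k hk => hUpos k (by rw [Finset.mem_range] at hk; omega))
  have hUu : 0 < U u (par u) := pos_up hM hA hI hT hu hne
  have hparu : par u = u.take m := by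
    rw [par, List.dropLast_eq_take]
    congr 1
    omega
  have htop : u.take (m + 1) = u := by rw [← hlen]; exact List.take_length
  have hden : ∏ k ∈ Finset.range u.length, U (u.take (k + 1)) (u.take k)
      = (∏ k ∈ Finset.range m, U (u.take (k + 1)) (u.take k)) * U u (par u) := by
    rw [hlen, Finset.prod_range_succ, htop, hparu]
  have hPprodj : ∀ j, j ≤ m → (hMat T U (u.take j)).det
      = hInv T U (u.take j) * ∏ k ∈ Finset.range j, U (u.take (k + 1)) (u.take k) := by
    intro j hj
    have hPj : ∏ k ∈ Finset.range j, U (u.take (k + 1)) (u.take k) ≠ 0 :=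
      ne_of_gt (Finset.prod_pos (fun k hk => hUpos k (by rw [Finset.mem_range] at hk; omega)))
    have hval : hInv T U (u.take j)
        = (hMat T U (u.take j)).det / ∏ k ∈ Finset.range j, U (u.take (k + 1)) (u.take k) := by
      have hpeq : ∏ k ∈ Finset.range (u.take j).length,
          U ((u.take j).take (k + 1)) ((u.take j).take k)
          = ∏ k ∈ Finset.range j, U (u.take (k + 1)) (u.take k) := by
        simp only [take_length_eq (show j ≤ u.length by omega)]
        apply Finset.prod_congr rfl
        intro k hk
        rw [Finset.mem_range] at hk
        rw [take_take_eq u (by omega), take_take_eq u (by omega)]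
      show (hMat T U (u.take j)).det / ∏ k ∈ Finset.range (u.take j).length,
          U ((u.take j).take (k + 1)) ((u.take j).take k) = _
      rw [hpeq]
    rw [hval, div_mul_cancel₀ _ hPj]
  have hD := lemD hT hM hA (m + 1) u hu hlen (by omega)
  simp only [Nat.add_sub_cancel] at hD
  have key : ∀ j ∈ Finset.range (m + 1),
      descWeight T U (u.take j) u * (hMat T U (u.take j)).det *
          ∏ k ∈ Finset.Ico j m, U (u.take (k + 1)) (u.take k)
        = (hInv T U (u.take j) * descWeight T U (u.take j) u) *
            ∏ k ∈ Finset.range m, U (u.take (k + 1)) (u.take k) := by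
    intro j hj
    rw [Finset.mem_range] at hj
    rw [hPprodj j (by omega),
      ← Finset.prod_range_mul_prod_Ico (fun k => U (u.take (k + 1)) (u.take k))
        (show j ≤ m by omega)]
    ring
  have hsum : (hMat T U u).det
      = (∑ j ∈ Finset.range (m + 1), hInv T U (u.take j) * descWeight T U (u.take j) u) *
          ∏ k ∈ Finset.range m, U (u.take (k + 1)) (u.take k) := by
    rw [hD, Finset.sum_congr rfl key, ← Finset.sum_mul]
  have hInv_u : hInv T U u = (hMat T U u).det /
      ((∏ k ∈ Finset.range m, U (u.take (k + 1)) (u.take k)) * U u (par u)) := by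
    show (hMat T U u).det / ∏ k ∈ Finset.range u.length,
        U (u.take (k + 1)) (u.take k) = _
    rw [hden]
  rw [hlen, hInv_u, hsum]
  field_simp

lemma hInv_pos (hT : IsTree T) (hM : IsTransMatrix T U) (hA : IsAUD T U)
    (hI : IrreducibleOn T U) : ∀ u, u ∈ T → 0 < hInv T U u := by
  suffices H : ∀ n u, u ∈ T → u.length = n → 0 < hInv T U u from
    fun u hu => H u.length u hu rfl
  intro n
  induction n using Nat.strong_induction_on with
  | _ n IH =>
  intro u hu hlen
  rcases Nat.eq_zero_or_pos n with rfl | hn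
  · have : u = [] := List.length_eq_zero_iff.mp hlen
    subst this
    simp [hInv, Matrix.det_fin_zero]
  · have hne : u ≠ [] := by
      intro h
      rw [h] at hlen
      simp at hlen
      omega
    have hE := lemE hT hM hA hI hu hne
    have hUu : 0 < U u (par u) := pos_up hM hA hI hT hu hne
    obtain ⟨j0, hj0, hdw⟩ := reach hT hM hA hI hu hne
    have hSpos : 0 < ∑ j ∈ Finset.range u.length,
        hInv T U (u.take j) * descWeight T U (u.take j) u := by
      apply Finset.sum_pos'
      · intro j hj
        rw [Finset.mem_range] at hj
        have h1 : 0 < hInv T U (u.take j) :=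
          IH j (by omega) (u.take j) (take_mem hT hu j) (take_length_eq (by omega))
        exact mul_nonneg h1.le (descWeight_nonneg hM (take_mem hT hu j) u)
      · exact ⟨j0, Finset.mem_range.mpr hj0,
          mul_pos (IH j0 (by omega) _ (take_mem hT hu j0) (take_length_eq (by omega))) hdw⟩
    nlinarith [hSpos, hUu, hE]

end Chain
theorem hInv_invariant (T : Set Word) (hT : IsTree T) (U : Word → Word → ℝ)
    (hM : IsTransMatrix T U) (hA : IsAUD T U) (hI : IrreducibleOn T U) :
    ∀ u ∈ T, 0 < hInv T U u ∧
      hInv T U u = ∑' v : T, hInv T U (v : Word) * U (v : Word) u := by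
  classical
  intro u hu
  refine ⟨hInv_pos hT hM hA hI u hu, ?_⟩
  set chS := (hT.2.2 u hu).toFinset with hchS
  -- node balance, finite form
  have NB1 : hInv T U u = ∑ j ∈ Finset.range (u.length + 1),
      hInv T U (u.take j) * descWeight T U (u.take j) u := by
    rw [Finset.sum_range_succ, List.take_length]
    by_cases hne : u = []
    · subst hne
      simp [descWeight_root hM hT.1]
    · rw [← lemE hT hM hA hI hu hne]
      have h1 := one_eq hT hM hA hu hne
      linear_combination (hInv T U u) * h1
  have NB2 : ∀ j ∈ Finset.range (u.length + 1),
      hInv T U (u.take j) * descWeight T U (u.take j) u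
        = hInv T U (u.take j) * U (u.take j) u
          + ∑ i ∈ chS, hInv T U (u.take j) * descWeight T U (u.take j) (u ++ [i]) := by
    intro j _
    rw [lemB hT hM (take_mem hT hu j) hu, mul_add, Finset.mul_sum]
  have NB3 : ∀ i ∈ chS, ∑ j ∈ Finset.range (u.length + 1),
      hInv T U (u.take j) * descWeight T U (u.take j) (u ++ [i])
        = hInv T U (u ++ [i]) * U (u ++ [i]) u := by
    intro i hi
    have hc : u ++ [i] ∈ T := by
      rw [hchS, Set.Finite.mem_toFinset] at hi
      exact hi
    have hE := lemE hT hM hA hI hc (by simp)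
    have hclen : (u ++ [i]).length = u.length + 1 := by simp
    have hpc : par (u ++ [i]) = u := List.dropLast_concat
    rw [hpc, hclen] at hE
    rw [hE]
    apply Finset.sum_congr rfl
    intro j hj
    rw [Finset.mem_range] at hj
    rw [List.take_append_of_le_length (by omega)]
  have hfin : hInv T U u = ∑ j ∈ Finset.range (u.length + 1),
      hInv T U (u.take j) * U (u.take j) u
      + ∑ i ∈ chS, hInv T U (u ++ [i]) * U (u ++ [i]) u := by
    rw [NB1, Finset.sum_congr rfl NB2, Finset.sum_add_distrib]
    congr 1
    rw [Finset.sum_comm]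
    exact Finset.sum_congr rfl NB3
  -- the tsum reduces to the same finite sum
  set F : Word → ℝ := fun w => hInv T U w * U w u with hF
  set sPre : Finset Word := (Finset.range (u.length + 1)).image (fun j => u.take j) with hsPre
  set sCh : Finset Word := chS.image (fun i => u ++ [i]) with hsCh
  have hsupp : ∀ w, w ∉ sPre ∪ sCh → T.indicator F w = 0 := by
    intro w hw
    by_cases hwT : w ∈ T
    · rw [Set.indicator_of_mem hwT]
      have hU0 : U w u = 0 := by
        by_contra h0
        have hpos : 0 < U w u := lt_of_le_of_ne (hM.1 w hwT u hu) (Ne.symm h0)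
        rcases hA w hwT u hu hpos with h | h
        · -- u = par w
          apply hw
          rcases eq_or_ne w [] with rfl | hwne
          · apply Finset.mem_union_left
            rw [hsPre, Finset.mem_image]
            have : u = [] := h
            exact ⟨0, by simp, by simp [this]⟩
          · apply Finset.mem_union_right
            rw [hsCh, Finset.mem_image]
            refine ⟨w.getLast hwne, ?_, ?_⟩
            · rw [hchS, Set.Finite.mem_toFinset]
              show u ++ [w.getLast hwne] ∈ T
              rw [h, par]
              rw [List.dropLast_append_getLast hwne]
              exact hwT
            · rw [h, par, List.dropLast_append_getLast hwne]
        · -- w <+: u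
          apply hw
          apply Finset.mem_union_left
          rw [hsPre, Finset.mem_image]
          refine ⟨w.length, ?_, ?_⟩
          · rw [Finset.mem_range]
            have := h.2.length_le
            omega
          · exact (List.prefix_iff_eq_take.mp h.2).symm
      rw [hF]
      simp [hU0]
    · rw [Set.indicator_of_notMem hwT]
  have htsum : ∑' v : T, hInv T U (v : Word) * U (v : Word) u
      = ∑ w ∈ sPre ∪ sCh, T.indicator F w := by
    rw [show (fun v : T => hInv T U (v : Word) * U (v : Word) u) = fun v : T => F (v : Word)
      from rfl]
    rw [tsum_subtype T F]
    exact tsum_eq_sum hsupp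
  have hdisj : Disjoint sPre sCh := by
    rw [Finset.disjoint_left]
    intro w h1 h2
    rw [hsPre, Finset.mem_image] at h1
    rw [hsCh, Finset.mem_image] at h2
    obtain ⟨j, hj, rfl⟩ := h1
    obtain ⟨i, hi, he⟩ := h2
    have l1 : (u.take j).length ≤ u.length := by rw [List.length_take]; omega
    have l2 : (u ++ [i]).length = u.length + 1 := by simp
    rw [he] at l2
    omega
  have hPreSum : ∑ w ∈ sPre, T.indicator F w
      = ∑ j ∈ Finset.range (u.length + 1), hInv T U (u.take j) * U (u.take j) u := by
    rw [hsPre, Finset.sum_image]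
    · apply Finset.sum_congr rfl
      intro j hj
      rw [Set.indicator_of_mem (take_mem hT hu j)]
    · intro x hx y hy he
      rw [Finset.mem_coe, Finset.mem_range] at hx hy
      have := congrArg List.length he
      rw [take_length_eq (by omega), take_length_eq (by omega)] at this
      exact this
  have hChSum : ∑ w ∈ sCh, T.indicator F w
      = ∑ i ∈ chS, hInv T U (u ++ [i]) * U (u ++ [i]) u := by
    rw [hsCh, Finset.sum_image]
    · apply Finset.sum_congr rfl
      intro i hi
      have hc : u ++ [i] ∈ T := by
        rw [hchS, Set.Finite.mem_toFinset] at hi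
        exact hi
      rw [Set.indicator_of_mem hc]
    · intro x _ y _ he
      simpa using he
  rw [htsum, Finset.sum_union hdisj, hPreSum, hChSum]
  exact hfin
end

section
/- Let U be an irreducible AUD transition matrix on an infinite rooted locally finite tree T, let i be a child of the root ∅, and let h ≥ 2 be an integer. Let T_{i,<h} = {u ∈ T_i : |u| < h} (a finite set), let U_{[i,<h]} denote the square matrix (U(u,v))_{u,v ∈ T_{i,<h}}, and let U_{[i,<h]}^{(i)} denote the same matrix with the row and column of index i deleted. Then det(Id − U_{[i,<h]}) ≠ 0, and q_h(i) = ( det(Id − U_{[i,<h]}^{(i)}) / det(Id − U_{[i,<h]}) ) · U(i,∅), where q_h(i) is the sum of W(γ) over all finite paths γ = (x_0 = i, x_1, …, x_n = ∅) with n ≥ 1 such that x_k ≠ ∅ and |x_k| < h for every 0 < k < n. -/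
open scoped BigOperators ENNReal

section WgtAux
variable {U : Word → Word → ℝ}

lemma wgt_cons (x y : Word) (rest : List Word) :
    wgt U (x :: y :: rest) = U x y * wgt U (y :: rest) := rfl

lemma wgt_step : ∀ (γ : List Word) (k : ℕ), wgt U γ ≠ 0 → k + 1 < γ.length →
    U (γ.getD k []) (γ.getD (k + 1) []) ≠ 0 := by
  intro γ
  induction γ with
  | nil => intro k _ hk; simp at hk
  | cons x rest ih =>
    intro k hW hk
    cases rest with
    | nil => simp at hk
    | cons y rest' =>
      rw [wgt_cons] at hW
      cases k with
      | zero =>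
        simpa using mul_ne_zero_iff.mp hW |>.1
      | succ k' =>
        rw [List.getD_cons_succ, List.getD_cons_succ]
        exact ih k' (mul_ne_zero_iff.mp hW).2 (by simpa using hk)

lemma wgt_nonneg {T : Set Word} (hU : ∀ u ∈ T, ∀ v ∈ T, 0 ≤ U u v) :
    ∀ γ : List Word, (∀ x ∈ γ, x ∈ T) → 0 ≤ wgt U γ := by
  intro γ
  induction γ with
  | nil => intro _; norm_num [wgt]
  | cons x rest ih =>
    intro hmem
    cases rest with
    | nil => norm_num [wgt]
    | cons y rest' =>
      rw [wgt_cons]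
      have h1 : 0 ≤ U x y := hU x (hmem x (by simp)) y (hmem y (by simp))
      have h2 : 0 ≤ wgt U (y :: rest') := ih fun z hz => hmem z (by simp [hz])
      positivity

end WgtAux

section EscapeAux
variable {T : Set Word} {U : Word → Word → ℝ} {i : Word} {h : ℕ}

lemma isEscape_of_list (hiT : i ∈ T) (hrT : ([] : Word) ∈ T) (hine : i ≠ [])
    (hilen : i.length < h) (l : List {u : Word // u ∈ T ∧ i <+: u ∧ u.length < h}) :
    IsEscape T i h (i :: l.map Subtype.val ++ [([] : Word)]) := by
  refine ⟨by simp, rfl, List.getLast?_concat, ?_, ?_⟩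
  · intro x hx
    rcases List.mem_append.mp hx with hx' | hx'
    · rcases List.mem_cons.mp hx' with rfl | hx''
      · exact hiT
      · obtain ⟨b, _, rfl⟩ := List.mem_map.mp hx''
        exact b.2.1
    · rw [List.mem_singleton.mp hx']; exact hrT
  · intro k hk0 hklt
    obtain ⟨k', rfl⟩ : ∃ k', k = k' + 1 := ⟨k - 1, by omega⟩
    have hk'X : k' < (l.map Subtype.val).length := by
      have : ((i :: l.map Subtype.val) ++ [([] : Word)]).length
          = (l.map Subtype.val).length + 2 := by simp
      omega
    have hgd : ((i :: l.map Subtype.val) ++ [([] : Word)]).getD (k' + 1) []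
        = (l.map Subtype.val).getD k' [] := by
      rw [show (i :: l.map Subtype.val) ++ [([] : Word)]
        = i :: (l.map Subtype.val ++ [([] : Word)]) from rfl]
      rw [List.getD_cons_succ]
      exact List.getD_append _ _ _ _ hk'X
    have hmem : (l.map Subtype.val).getD k' [] ∈ l.map Subtype.val := by
      rw [List.getD_eq_getElem _ _ hk'X]
      exact List.getElem_mem _
    obtain ⟨b, _, hb⟩ := List.mem_map.mp hmem
    rw [hgd, ← hb]
    refine ⟨?_, b.2.2.2⟩
    intro hnil
    have := b.2.2.1
    rw [hnil] at this
    exact hine (List.prefix_nil.mp this)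

lemma escape_decomp (hU : ∀ u ∈ T, ∀ v ∈ T, 0 ≤ U u v) (hA : IsAUD T U)
    (hilen1 : i.length = 1) (γ : List Word) (hesc : IsEscape T i h γ)
    (hW : wgt U γ ≠ 0) :
    ∃ l : List {u : Word // u ∈ T ∧ i <+: u ∧ u.length < h},
      γ = i :: l.map Subtype.val ++ [([] : Word)] := by
  obtain ⟨hlen, hhead, hlast, hmemT, hint⟩ := hesc
  have hine : i ≠ [] := by intro hc; rw [hc] at hilen1; simp at hilen1
  cases γ with
  | nil => simp at hlen
  | cons x rest =>
  have hx : x = i := by simpa using hhead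
  have hrne : rest ≠ [] := by intro hc; rw [hc] at hlen; simp at hlen
  have hlastr : rest.getLast hrne = [] := by
    have h1 : (x :: rest).getLast (by simp) = ([] : Word) := by
      have := hlast
      rw [List.getLast?_eq_getLast (by simp)] at this
      simpa using this
    rw [List.getLast_cons hrne] at h1
    exact h1
  obtain ⟨mid, rfl⟩ : ∃ mid, rest = mid ++ [([] : Word)] := by
    refine ⟨rest.dropLast, ?_⟩
    conv_lhs => rw [← List.dropLast_append_getLast hrne]
    rw [hlastr]
  set g : ℕ → Word := fun k => (x :: (mid ++ [([] : Word)])).getD k [] with hgdef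
  have hγlen : (x :: (mid ++ [([] : Word)])).length = mid.length + 2 := by simp
  have hg0 : g 0 = x := rfl
  have hgmid : ∀ k, k < mid.length → g (k + 1) = mid.getD k [] := by
    intro k hk
    show (mid ++ [([] : Word)]).getD k [] = mid.getD k []
    exact List.getD_append _ _ _ _ hk
  have hgT : ∀ k, k < mid.length + 2 → g k ∈ T := by
    intro k hk
    have : g k = (x :: (mid ++ [([] : Word)]))[k]'(by omega) :=
      List.getD_eq_getElem _ _ (by omega)
    rw [this]
    exact hmemT _ (List.getElem_mem _)
  have hpre : ∀ k, k < mid.length + 1 → i <+: g k := by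
    intro k
    induction k with
    | zero => intro _; rw [hg0, hx]
    | succ k ihk =>
      intro hk
      have ih := ihk (by omega)
      have hstep := wgt_step (U := U) (x :: (mid ++ [([] : Word)])) k hW (by omega)
      have hkT : g k ∈ T := hgT k (by omega)
      have hk1T : g (k + 1) ∈ T := hgT (k + 1) (by omega)
      have hpos : 0 < U (g k) (g (k + 1)) := lt_of_le_of_ne (hU _ hkT _ hk1T) (Ne.symm hstep)
      rcases hA _ hkT _ hk1T hpos with hpar | hdesc
      · have hne : g (k + 1) ≠ [] := (hint (k + 1) (by omega) (by omega)).1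
        by_cases hki : g k = i
        · exfalso
          rw [hpar, par, hki] at hne
          apply hne
          have : i.dropLast.length = 0 := by rw [List.length_dropLast, hilen1]
          exact List.eq_nil_of_length_eq_zero this
        · have hlt : i.length ≤ (g k).dropLast.length := by
            rw [List.length_dropLast]
            have h1 : i.length ≤ (g k).length := ih.length_le
            rcases lt_or_eq_of_le h1 with h2 | h2
            · omega
            · exact absurd (List.IsPrefix.eq_of_length ih h2).symm hki
          rw [hpar, par]
          exact List.prefix_of_prefix_length_le ih (List.dropLast_prefix _) hlt
      · exact ih.trans hdesc.2
  have hmidcond : ∀ y ∈ mid, y ∈ T ∧ i <+: y ∧ y.length < h := by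
    intro y hymem
    obtain ⟨k, hk, rfl⟩ := List.mem_iff_getElem.mp hymem
    have hyg : mid[k] = g (k + 1) := by
      rw [hgmid k hk, List.getD_eq_getElem _ _ hk]
    rw [hyg]
    exact ⟨hgT (k + 1) (by omega), hpre (k + 1) (by omega),
      (hint (k + 1) (by omega) (by omega)).2⟩
  refine ⟨mid.pmap (fun y hy => ⟨y, hy⟩) hmidcond, ?_⟩
  have hmap : (mid.pmap (fun y hy => (⟨y, hy⟩ : {u : Word // u ∈ T ∧ i <+: u ∧ u.length < h}))
      hmidcond).map Subtype.val = mid := by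
    rw [List.map_pmap]
    simp [List.pmap_eq_map]
  rw [hmap, hx]
  rfl

end EscapeAux

section FiberAux
variable {T : Set Word} {U : Word → Word → ℝ} {i : Word} {h : ℕ}
  [Fintype {u : Word // u ∈ T ∧ i <+: u ∧ u.length < h}]

lemma fiber_sum :
    ∀ (n : ℕ) (a : {u : Word // u ∈ T ∧ i <+: u ∧ u.length < h}),
      ∑ y : Fin n → {u : Word // u ∈ T ∧ i <+: u ∧ u.length < h},
        wgt U ((a : Word) :: (List.ofFn fun j => ((y j : Word))) ++ [([] : Word)])
      = ∑ b, ((Matrix.of fun p q : {u : Word // u ∈ T ∧ i <+: u ∧ u.length < h} =>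
          U p.1 q.1) ^ n) a b * U b.1 [] := by
  intro n
  induction n with
  | zero =>
    intro a
    have h1 : ∀ y : Fin 0 → {u : Word // u ∈ T ∧ i <+: u ∧ u.length < h},
        wgt U ((a : Word) :: (List.ofFn fun j => ((y j : Word))) ++ [([] : Word)])
          = U a.1 [] := by
      intro y
      rw [List.ofFn_zero]
      show U a.1 [] * 1 = U a.1 []
      ring
    rw [Finset.sum_congr rfl fun y _ => h1 y]
    simp [Matrix.one_apply]
  | succ n ih =>
    intro a
    have key : ∀ (x : {u : Word // u ∈ T ∧ i <+: u ∧ u.length < h} ×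
        (Fin n → {u : Word // u ∈ T ∧ i <+: u ∧ u.length < h})),
        U a.1 x.1.1 * wgt U ((x.1 : Word) :: (List.ofFn fun j => ((x.2 j : Word)))
            ++ [([] : Word)])
        = wgt U ((a : Word) :: (List.ofFn fun j =>
            (((Fin.consEquiv fun _ : Fin (n + 1) =>
              {u : Word // u ∈ T ∧ i <+: u ∧ u.length < h}) x j : Word))) ++ [([] : Word)]) := by
      rintro ⟨c, y⟩
      have h3 : (List.ofFn fun j =>
          (((Fin.consEquiv fun _ : Fin (n + 1) =>
            {u : Word // u ∈ T ∧ i <+: u ∧ u.length < h}) (c, y) j : Word)))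
          = (c : Word) :: List.ofFn fun j => ((y j : Word)) := by
        rw [List.ofFn_succ]
        simp [Fin.consEquiv]
      rw [h3]
      rfl
    have hsum := Fintype.sum_equiv (Fin.consEquiv fun _ : Fin (n + 1) =>
      {u : Word // u ∈ T ∧ i <+: u ∧ u.length < h})
      (fun x => U a.1 x.1.1 * wgt U ((x.1 : Word) :: (List.ofFn fun j => ((x.2 j : Word)))
            ++ [([] : Word)]))
      (fun y => wgt U ((a : Word) :: (List.ofFn fun j => ((y j : Word))) ++ [([] : Word)]))
      key
    rw [← hsum, Fintype.sum_prod_type]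
    have h4 : ∀ c : {u : Word // u ∈ T ∧ i <+: u ∧ u.length < h},
        (∑ y : Fin n → {u : Word // u ∈ T ∧ i <+: u ∧ u.length < h},
          U a.1 c.1 * wgt U ((c : Word) :: (List.ofFn fun j => ((y j : Word)))
            ++ [([] : Word)]))
        = ∑ b, U a.1 c.1 * (((Matrix.of fun p q : {u : Word // u ∈ T ∧ i <+: u ∧ u.length < h} =>
            U p.1 q.1) ^ n) c b * U b.1 []) := by
      intro c
      rw [← Finset.mul_sum, ih c, Finset.mul_sum]
    rw [Finset.sum_congr rfl fun c _ => h4 c]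
    rw [Finset.sum_comm]
    refine Finset.sum_congr rfl fun b _ => ?_
    rw [pow_succ', Matrix.mul_apply, Finset.sum_mul]
    refine Finset.sum_congr rfl fun c _ => ?_
    rw [show (Matrix.of fun p q : {u : Word // u ∈ T ∧ i <+: u ∧ u.length < h} =>
      U p.1 q.1) a c = U a.1 c.1 from rfl]
    ring

end FiberAux


section MatrixAux
variable {ι : Type*} [Fintype ι] [DecidableEq ι] (M : Matrix ι ι ℝ)

lemma pow_apply_nonneg (h0 : ∀ a b, 0 ≤ M a b) : ∀ (n : ℕ) (a b : ι), 0 ≤ (M ^ n) a b := by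
  intro n
  induction n with
  | zero => intro a b; rw [pow_zero, Matrix.one_apply]; positivity
  | succ n ih =>
    intro a b
    rw [pow_succ, Matrix.mul_apply]
    exact Finset.sum_nonneg fun c _ => mul_nonneg (ih a c) (h0 c b)

lemma rowsum_pow_le_one (h0 : ∀ a b, 0 ≤ M a b) (h1 : ∀ a, ∑ b, M a b ≤ 1) :
    ∀ (n : ℕ) (a : ι), ∑ b, (M ^ n) a b ≤ 1 := by
  intro n
  induction n with
  | zero =>
    intro a
    simp [Matrix.one_apply]
  | succ n ih =>
    intro a
    rw [pow_succ']
    calc ∑ b, (M * M ^ n) a b = ∑ c, M a c * ∑ b, (M ^ n) c b := by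
          simp_rw [Matrix.mul_apply, Finset.mul_sum]
          rw [Finset.sum_comm]
      _ ≤ ∑ c, M a c * 1 := Finset.sum_le_sum fun c _ =>
          mul_le_mul_of_nonneg_left (ih c) (h0 a c)
      _ ≤ 1 := by simpa using h1 a

lemma rowsum_pow_add_le (h0 : ∀ a b, 0 ≤ M a b) (h1 : ∀ a, ∑ b, M a b ≤ 1)
    (m n : ℕ) (a : ι) : ∑ b, (M ^ (m + n)) a b ≤ ∑ b, (M ^ m) a b := by
  rw [pow_add]
  calc ∑ b, (M ^ m * M ^ n) a b = ∑ c, (M ^ m) a c * ∑ b, (M ^ n) c b := by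
        simp_rw [Matrix.mul_apply, Finset.mul_sum]
        rw [Finset.sum_comm]
    _ ≤ ∑ c, (M ^ m) a c * 1 := Finset.sum_le_sum fun c _ =>
        mul_le_mul_of_nonneg_left (rowsum_pow_le_one M h0 h1 n c) (pow_apply_nonneg M h0 m a c)
    _ = ∑ c, (M ^ m) a c := by simp

lemma rowsum_pow_contract (h0 : ∀ a b, 0 ≤ M a b) (h1 : ∀ a, ∑ b, M a b ≤ 1)
    {N : ℕ} {ρ : ℝ} (hρ0 : 0 ≤ ρ) (hN : ∀ a, ∑ b, (M ^ N) a b ≤ ρ) :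
    ∀ (q : ℕ) (a : ι), ∑ b, (M ^ (q * N)) a b ≤ ρ ^ q := by
  intro q
  induction q with
  | zero => intro a; simpa [Matrix.one_apply] using rowsum_pow_le_one M h0 h1 0 a
  | succ q ih =>
    intro a
    have : (q + 1) * N = N + q * N := by ring
    rw [this, pow_add]
    calc ∑ b, (M ^ N * M ^ (q * N)) a b
        = ∑ c, (M ^ N) a c * ∑ b, (M ^ (q * N)) c b := by
          simp_rw [Matrix.mul_apply, Finset.mul_sum]
          rw [Finset.sum_comm]
      _ ≤ ∑ c, (M ^ N) a c * ρ ^ q := Finset.sum_le_sum fun c _ =>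
          mul_le_mul_of_nonneg_left (ih c) (pow_apply_nonneg M h0 N a c)
      _ = (∑ c, (M ^ N) a c) * ρ ^ q := by rw [Finset.sum_mul]
      _ ≤ ρ * ρ ^ q := mul_le_mul_of_nonneg_right (hN a) (pow_nonneg hρ0 q)
      _ = ρ ^ (q + 1) := (pow_succ' ρ q).symm

lemma summable_pow_apply (h0 : ∀ a b, 0 ≤ M a b) (h1 : ∀ a, ∑ b, M a b ≤ 1)
    {N : ℕ} (hN1 : 1 ≤ N) {ρ : ℝ} (hρ0 : 0 ≤ ρ) (hρ1 : ρ < 1)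
    (hN : ∀ a, ∑ b, (M ^ N) a b ≤ ρ) (a b : ι) :
    Summable fun n => (M ^ n) a b := by
  have hbound : ∀ n, (M ^ n) a b ≤ ρ ^ (n / N) := by
    intro n
    have h2 : (M ^ n) a b ≤ ∑ b', (M ^ n) a b' :=
      Finset.single_le_sum (fun c _ => pow_apply_nonneg M h0 n a c) (Finset.mem_univ b)
    have h3 : n = (n / N) * N + n % N := by rw [Nat.add_comm]; exact (Nat.mod_add_div' n N).symm
    calc (M ^ n) a b ≤ ∑ b', (M ^ n) a b' := h2
      _ ≤ ∑ b', (M ^ ((n / N) * N)) a b' := by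
          nth_rewrite 1 [h3]
          exact rowsum_pow_add_le M h0 h1 _ _ a
      _ ≤ ρ ^ (n / N) := rowsum_pow_contract M h0 h1 hρ0 hN _ a
  apply summable_of_sum_range_le (fun n => pow_apply_nonneg M h0 n a b) (c := N * (1 - ρ)⁻¹)
  intro m
  calc ∑ n ∈ Finset.range m, (M ^ n) a b ≤ ∑ n ∈ Finset.range m, ρ ^ (n / N) :=
        Finset.sum_le_sum fun n _ => hbound n
    _ ≤ ∑ n ∈ Finset.range (N * m), ρ ^ (n / N) := by
        apply Finset.sum_le_sum_of_subset_of_nonneg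
        · exact Finset.range_subset_range.2 (Nat.le_mul_of_pos_left m hN1)
        · intro n _ _; positivity
    _ ≤ N * (1 - ρ)⁻¹ := by
        have key : ∀ m : ℕ, ∑ n ∈ Finset.range (N * m), ρ ^ (n / N)
            = N * ∑ q ∈ Finset.range m, ρ ^ q := by
          intro m
          induction m with
          | zero => simp
          | succ m ih =>
            rw [Nat.mul_succ, Finset.sum_range_add, ih, Finset.sum_range_succ]
            have : ∀ k ∈ Finset.range N, ρ ^ ((N * m + k) / N) = ρ ^ m := by
              intro k hk
              rw [Finset.mem_range] at hk
              congr 1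
              rw [Nat.mul_add_div (by omega), Nat.div_eq_of_lt hk]; omega
            rw [Finset.sum_congr rfl this, Finset.sum_const, Finset.card_range]
            push_cast; ring
        rw [key]
        have : ∑ q ∈ Finset.range m, ρ ^ q ≤ (1 - ρ)⁻¹ := by
          rw [← tsum_geometric_of_lt_one hρ0 hρ1]
          exact Summable.sum_le_tsum _ (fun n _ => pow_nonneg hρ0 n)
            (summable_geometric_of_lt_one hρ0 hρ1)
        have hN0 : (0:ℝ) ≤ N := by positivity
        exact mul_le_mul_of_nonneg_left this hN0

end MatrixAux
section MatrixAux2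
variable {ι : Type*} [Fintype ι] [DecidableEq ι] (M : Matrix ι ι ℝ)

lemma pow_apply_path_pos (h0 : ∀ a b, 0 ≤ M a b) (y : ℕ → ι) :
    ∀ (k : ℕ), (∀ j < k, 0 < M (y j) (y (j + 1))) → 0 < (M ^ k) (y 0) (y k) := by
  intro k
  induction k with
  | zero => intro _; simp [Matrix.one_apply]
  | succ k ih =>
    intro hy
    rw [pow_succ, Matrix.mul_apply]
    apply Finset.sum_pos'
    · intro c _
      exact mul_nonneg (pow_apply_nonneg M h0 k (y 0) c) (h0 c (y (k + 1)))
    · refine ⟨y k, Finset.mem_univ _, ?_⟩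
      exact mul_pos (ih fun j hj => hy j (by omega)) (hy k (by omega))

lemma one_sub_mul_tsum_pow (hsum : ∀ a b, Summable fun n => (M ^ n) a b) :
    (1 - M) * (Matrix.of fun a b => ∑' n, (M ^ n) a b) = 1 := by
  ext a b
  rw [Matrix.sub_mul, Matrix.one_mul, Matrix.sub_apply, Matrix.mul_apply]
  have h1 : ∀ c : ι, M a c * ∑' n, (M ^ n) c b = ∑' n, M a c * (M ^ n) c b := by
    intro c; rw [tsum_mul_left]
  simp_rw [Matrix.of_apply, h1]
  rw [← Summable.tsum_finsetSum (fun c _ => (hsum c b).mul_left (M a c))]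
  have h2 : ∀ n : ℕ, ∑ c, M a c * (M ^ n) c b = (M ^ (n + 1)) a b := by
    intro n; rw [pow_succ', Matrix.mul_apply]
  simp_rw [h2]
  rw [Summable.tsum_eq_zero_add (hsum a b)]
  simp [Matrix.one_apply]

end MatrixAux2

open Matrix in
lemma det_updateRow_single {n : Type*} [DecidableEq n] [Fintype n] (A : Matrix n n ℝ) (e : n) :
    (A.updateRow e (Pi.single e 1)).det
      = (Matrix.of fun a b : {x : n // x ≠ e} => A a.1 b.1).det := by
  classical
  obtain ⟨m, ⟨f⟩⟩ : ∃ m, Nonempty ({x : n // x ≠ e} ≃ Fin m) := ⟨_, ⟨Fintype.equivFin _⟩⟩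
  set B := A.updateRow e (Pi.single e 1) with hB
  let k : Fin (m + 1) ≃ n :=
    (finSuccEquiv m).trans ((f.symm.optionCongr).trans (Equiv.optionSubtypeNe e))
  have hk0 : k 0 = e := by simp [k]; rfl
  have hks : ∀ j : Fin m, k j.succ = (f.symm j).1 := by
    intro j; simp [k]; rfl
  have h1 : B.det = (B.submatrix k k).det := (Matrix.det_submatrix_equiv_self k B).symm
  rw [h1, Matrix.det_succ_row_zero]
  rw [Finset.sum_eq_single 0]
  · have h2 : (B.submatrix k k) 0 0 = 1 := by
      simp [hk0, Matrix.updateRow_self, Pi.single_eq_same, B]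
    rw [h2]
    have h3 : ((B.submatrix k k).submatrix Fin.succ (Fin.succAbove 0)).det
        = (Matrix.of fun a b : {x : n // x ≠ e} => A a.1 b.1).det := by
      rw [Fin.succAbove_zero]
      have : (B.submatrix k k).submatrix Fin.succ Fin.succ
          = (Matrix.of fun a b : {x : n // x ≠ e} => A a.1 b.1).submatrix f.symm f.symm := by
        ext a b
        simp only [Matrix.submatrix_apply, hks, Matrix.of_apply]
        rw [hB, Matrix.updateRow_ne (f.symm a).2]
      rw [this, Matrix.det_submatrix_equiv_self]
    rw [h3]
    norm_num
  · intro j _ hj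
    have : (B.submatrix k k) 0 j = 0 := by
      have hkj : k j ≠ e := by
        rw [← hk0]; exact fun hc => hj (k.injective hc)
      simp [B, hk0, Matrix.updateRow_self, Pi.single_eq_of_ne' hkj]
      exact Pi.single_eq_of_ne hkj 1
    rw [this]; ring
  · intro hc; exact absurd (Finset.mem_univ 0) hc

theorem qval_det_formula (T : Set Word) (hT : IsTree T) (hinf : T.Infinite)
    (U : Word → Word → ℝ) (hM : IsTransMatrix T U) (hA : IsAUD T U)
    (hI : IrreducibleOn T U) (i : Word) (hi : i ∈ children T ([] : Word))
    (h : ℕ) (hh : 2 ≤ h)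
    [Fintype {u : Word // u ∈ T ∧ i <+: u ∧ u.length < h}] :
    Matrix.det (1 - Matrix.of (fun a b : {u : Word // u ∈ T ∧ i <+: u ∧ u.length < h} =>
        U a.1 b.1)) ≠ 0 ∧
    qval T U i h =
      Matrix.det (1 - Matrix.of
          (fun a b : {x : {u : Word // u ∈ T ∧ i <+: u ∧ u.length < h} // x.1 ≠ i} =>
            U a.1.1 b.1.1)) /
        Matrix.det (1 - Matrix.of
          (fun a b : {u : Word // u ∈ T ∧ i <+: u ∧ u.length < h} => U a.1 b.1)) *
        U i [] := by
  classical
  obtain ⟨hiT, c, hic⟩ := hi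
  have hilen1 : i.length = 1 := by rw [hic]; rfl
  have hine : i ≠ [] := by intro hc; rw [hc] at hilen1; simp at hilen1
  have hrT : ([] : Word) ∈ T := hT.1
  set M := Matrix.of (fun a b : {u : Word // u ∈ T ∧ i <+: u ∧ u.length < h} =>
    U a.1 b.1) with hMdef
  set e : {u : Word // u ∈ T ∧ i <+: u ∧ u.length < h} :=
    ⟨i, hiT, List.prefix_refl i, by omega⟩ with hedef
  have h0 : ∀ a b, 0 ≤ M a b := fun a b => hM.1 _ a.2.1 _ b.2.1
  -- row sums
  let femb : {u : Word // u ∈ T ∧ i <+: u ∧ u.length < h} ↪ T :=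
    ⟨fun b => ⟨b.1, b.2.1⟩, fun a b hab => by
      simpa [Subtype.ext_iff] using hab⟩
  have key1 : ∀ a, ∑ b, M a b ≤ 1 := by
    intro a
    have hs : HasSum (fun v : T => U a.1 (v : Word)) 1 := hM.2 a.1 a.2.1
    have := sum_le_hasSum (Finset.univ.map femb)
      (fun v _ => hM.1 _ a.2.1 _ v.2) hs
    rw [Finset.sum_map] at this
    exact this
  have key2 : ∀ a (t : Word), t ∈ T → ¬(i <+: t ∧ t.length < h) →
      (∑ b, M a b) + U a.1 t ≤ 1 := by
    intro a t htT hnot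
    have hs : HasSum (fun v : T => U a.1 (v : Word)) 1 := hM.2 a.1 a.2.1
    have htn : (⟨t, htT⟩ : T) ∉ Finset.univ.map femb := by
      intro hc
      obtain ⟨b, _, hb⟩ := Finset.mem_map.mp hc
      have : b.1 = t := congrArg Subtype.val hb
      exact hnot (this ▸ ⟨b.2.2.1, b.2.2.2⟩)
    have := sum_le_hasSum (insert (⟨t, htT⟩ : T) (Finset.univ.map femb))
      (fun v _ => hM.1 _ a.2.1 _ v.2) hs
    rw [Finset.sum_insert htn, Finset.sum_map] at this
    have h13 : U a.1 t + ∑ b, M a b ≤ 1 := this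
    linarith
  -- escape from the box
  have hexit : ∀ a, ∃ n, 1 ≤ n ∧ ∑ b, (M ^ n) a b < 1 := by
    intro a
    obtain ⟨n, x, hx0, hxn, hxT, hxpos⟩ := hI a.1 a.2.1 [] hrT
    have hex : ∃ k, k ≤ n ∧ ¬(i <+: x k ∧ (x k).length < h) := by
      refine ⟨n, le_refl n, ?_⟩
      rw [hxn]
      rintro ⟨hp, -⟩
      exact hine (List.prefix_nil.mp hp)
    set k₀ := Nat.find hex with hk₀def
    have hk₀spec := Nat.find_spec hex
    have hk₀n : k₀ ≤ n := hk₀spec.1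
    have hS : ∀ j, j < k₀ → i <+: x j ∧ (x j).length < h := by
      intro j hj
      have := Nat.find_min hex hj
      push_neg at this
      exact this (by omega)
    have hk₀pos : 1 ≤ k₀ := by
      rcases Nat.eq_zero_or_pos k₀ with hc | hc
      · exfalso
        have h14 := hk₀spec.2
        rw [← hk₀def, hc, hx0] at h14
        exact h14 ⟨a.2.2.1, a.2.2.2⟩
      · exact hc
    obtain ⟨k₁, hk₁⟩ : ∃ k₁, k₀ = k₁ + 1 := ⟨k₀ - 1, by omega⟩
    set y : ℕ → {u : Word // u ∈ T ∧ i <+: u ∧ u.length < h} := fun j =>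
      ⟨x (min j k₁), hxT _ (by omega), (hS _ (by omega)).1, (hS _ (by omega)).2⟩ with hydef
    have hy0 : y 0 = a := by
      apply Subtype.ext
      show x (min 0 k₁) = a.1
      rw [Nat.min_eq_left (by omega), hx0]
    have hyk : (y k₁).1 = x k₁ := by
      show x (min k₁ k₁) = x k₁
      rw [Nat.min_self]
    have hwpos : 0 < (M ^ k₁) a (y k₁) := by
      rw [← hy0]
      apply pow_apply_path_pos M h0 y k₁
      intro j hj
      have h1 : M (y j) (y (j + 1)) = U (x j) (x (j + 1)) := by
        show U (x (min j k₁)) (x (min (j + 1) k₁)) = _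
        rw [Nat.min_eq_left (by omega), Nat.min_eq_left (by omega)]
      rw [h1]
      exact hxpos j (by omega)
    have hrowlt : ∑ b, M (y k₁) b < 1 := by
      have h2 := key2 (y k₁) (x k₀) (hxT _ hk₀n) hk₀spec.2
      have h3 : 0 < U (x k₁) (x k₀) := by
        have := hxpos k₁ (by omega)
        rw [show k₁ + 1 = k₀ from by omega] at this
        exact this
      rw [hyk] at h2
      linarith
    refine ⟨k₀, hk₀pos, ?_⟩
    rw [hk₁, pow_succ]
    have hswap : ∑ b, (M ^ k₁ * M) a b = ∑ cc, (M ^ k₁) a cc * ∑ b, M cc b := by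
      simp_rw [Matrix.mul_apply, Finset.mul_sum]
      rw [Finset.sum_comm]
    rw [hswap]
    have hlt : ∑ cc, (M ^ k₁) a cc * ∑ b, M cc b < ∑ cc, (M ^ k₁) a cc := by
      apply Finset.sum_lt_sum
      · intro cc _
        exact mul_le_of_le_one_right (pow_apply_nonneg M h0 k₁ a cc) (key1 cc)
      · refine ⟨y k₁, Finset.mem_univ _, ?_⟩
        calc (M ^ k₁) a (y k₁) * ∑ b, M (y k₁) b
            < (M ^ k₁) a (y k₁) * 1 := mul_lt_mul_of_pos_left hrowlt hwpos
          _ = (M ^ k₁) a (y k₁) := mul_one _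
    exact lt_of_lt_of_le hlt (rowsum_pow_le_one M h0 key1 k₁ a)
  -- uniform contraction
  set nf : {u : Word // u ∈ T ∧ i <+: u ∧ u.length < h} → ℕ :=
    fun a => (hexit a).choose with hnfdef
  have hnf : ∀ a, 1 ≤ nf a ∧ ∑ b, (M ^ nf a) a b < 1 := fun a => (hexit a).choose_spec
  set N := Finset.univ.sup nf with hNdef
  have hN1 : 1 ≤ N := le_trans (hnf e).1 (Finset.le_sup (Finset.mem_univ e))
  have hNlt : ∀ a, ∑ b, (M ^ N) a b < 1 := by
    intro a
    have hle : nf a ≤ N := Finset.le_sup (Finset.mem_univ a)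
    have h5 := rowsum_pow_add_le M h0 key1 (nf a) (N - nf a) a
    rw [Nat.add_sub_cancel' hle] at h5
    exact lt_of_le_of_lt h5 (hnf a).2
  set ρ := Finset.univ.sup' ⟨e, Finset.mem_univ e⟩ (fun a => ∑ b, (M ^ N) a b) with hρdef
  have hρlt : ρ < 1 := (Finset.sup'_lt_iff _).mpr fun a _ => hNlt a
  have hρle : ∀ a, ∑ b, (M ^ N) a b ≤ ρ := fun a => Finset.le_sup' (fun a => ∑ b, (M ^ N) a b) (Finset.mem_univ a)
  have hρ0 : 0 ≤ ρ :=
    le_trans (Finset.sum_nonneg fun b _ => pow_apply_nonneg M h0 N e b) (hρle e)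
  have hsummable : ∀ a b, Summable fun n => (M ^ n) a b :=
    summable_pow_apply M h0 key1 hN1 hρ0 hρlt hρle
  set A := Matrix.of (fun a b : {u : Word // u ∈ T ∧ i <+: u ∧ u.length < h} =>
    ∑' n : ℕ, (M ^ n) a b) with hAdef
  have hone : (1 - M) * A = 1 := one_sub_mul_tsum_pow M hsummable
  have hdetU : IsUnit (1 - M).det := Matrix.isUnit_det_of_right_inverse hone
  refine ⟨hdetU.ne_zero, ?_⟩
  -- only i can step to the root
  have hU0 : ∀ b : {u : Word // u ∈ T ∧ i <+: u ∧ u.length < h},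
      b ≠ e → U b.1 [] = 0 := by
    intro b hbe
    by_contra hne
    have hpos : 0 < U b.1 [] := lt_of_le_of_ne (hM.1 _ b.2.1 _ hrT) (Ne.symm hne)
    rcases hA _ b.2.1 _ hrT hpos with hpar | hdesc
    · apply hbe
      apply Subtype.ext
      have hlb : b.1.length ≤ 1 := by
        have h6 := congrArg List.length hpar
        rw [par, List.length_dropLast] at h6
        simp at h6
        omega
      have hge : i.length ≤ b.1.length := b.2.2.1.length_le
      exact (List.IsPrefix.eq_of_length b.2.2.1 (by omega)).symm
    · have hb0 : b.1 = [] := List.prefix_nil.mp hdesc.2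
      have hpre := b.2.2.1
      rw [hb0] at hpre
      exact hine (List.prefix_nil.mp hpre)
  -- the path sum
  have hq : qval T U i h = (∑' n : ℕ, (M ^ n) e e) * U i [] := by
    have step1 : qval T U i h =
        ∑' l : List {u : Word // u ∈ T ∧ i <+: u ∧ u.length < h},
          wgt U (i :: l.map Subtype.val ++ [([] : Word)]) := by
      apply tsum_eq_tsum_of_ne_zero_bij
        (fun l => (⟨i :: l.1.map Subtype.val ++ [([] : Word)],
          isEscape_of_list hiT hrT hine (by omega) l.1⟩ :
            {γ : List Word // IsEscape T i h γ}))
      · intro l1 l2 heq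
        have h7 : i :: (l1.1 : List _).map Subtype.val ++ [([] : Word)]
            = i :: (l2.1 : List _).map Subtype.val ++ [([] : Word)] :=
          congrArg Subtype.val heq
        apply Subtype.ext
        have h8 := List.append_cancel_right ((List.cons.injEq _ _ _ _).mp h7).2
        exact List.map_injective_iff.mpr Subtype.val_injective h8
      · rintro γ hγ
        obtain ⟨l, hl⟩ := escape_decomp hM.1 hA hilen1 γ.1 γ.2 hγ
        have hgl : wgt U (i :: l.map Subtype.val ++ [([] : Word)]) ≠ 0 := by
          rw [← hl]; exact hγ
        exact ⟨⟨l, hgl⟩, Subtype.ext hl.symm⟩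
      · intro l; rfl
    have step2 : ∑' l : List {u : Word // u ∈ T ∧ i <+: u ∧ u.length < h},
          wgt U (i :: l.map Subtype.val ++ [([] : Word)])
        = ∑' p : Σ n : ℕ, Fin n → {u : Word // u ∈ T ∧ i <+: u ∧ u.length < h},
          wgt U (i :: (List.ofFn fun j => ((p.2 j : Word))) ++ [([] : Word)]) := by
      rw [← Equiv.tsum_eq (List.equivSigmaTuple
        (α := {u : Word // u ∈ T ∧ i <+: u ∧ u.length < h})).symm]
      apply tsum_congr
      intro p
      have h9 : ((List.equivSigmaTuple
          (α := {u : Word // u ∈ T ∧ i <+: u ∧ u.length < h})).symm p).map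
          (Subtype.val : {u : Word // u ∈ T ∧ i <+: u ∧ u.length < h} → Word)
          = List.ofFn fun j => ((p.2 j : Word)) := by
        show (List.ofFn p.2).map Subtype.val = _
        rw [List.map_ofFn]
        rfl
      rw [show (List.equivSigmaTuple
        (α := {u : Word // u ∈ T ∧ i <+: u ∧ u.length < h})).symm p = List.ofFn p.2 from rfl]
      rw [← h9]
      rfl
    have hfib : ∀ n : ℕ,
        ∑ y : Fin n → {u : Word // u ∈ T ∧ i <+: u ∧ u.length < h},
          wgt U (i :: (List.ofFn fun j => ((y j : Word))) ++ [([] : Word)])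
        = (M ^ n) e e * U i [] := by
      intro n
      have h10 := fiber_sum (T := T) (U := U) (i := i) (h := h) n e
      rw [show (e : Word) = i from rfl] at h10
      rw [h10]
      rw [Finset.sum_eq_single e]
      · intro b _ hbe
        rw [hU0 b hbe, mul_zero]
      · intro hc
        exact absurd (Finset.mem_univ e) hc
    have hGnn : ∀ p : Σ n : ℕ, Fin n → {u : Word // u ∈ T ∧ i <+: u ∧ u.length < h},
        0 ≤ wgt U (i :: (List.ofFn fun j => ((p.2 j : Word))) ++ [([] : Word)]) := by
      intro p
      apply wgt_nonneg hM.1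
      intro x hx
      rcases List.mem_append.mp hx with hx1 | hx1
      · rcases List.mem_cons.mp hx1 with rfl | hx2
        · exact hiT
        · obtain ⟨j, hj⟩ := List.mem_ofFn.mp hx2
          rw [← hj]
          exact (p.2 j).2.1
      · rw [List.mem_singleton.mp hx1]
        exact hrT
    have hGsummable : Summable fun p :
        Σ n : ℕ, Fin n → {u : Word // u ∈ T ∧ i <+: u ∧ u.length < h} =>
        wgt U (i :: (List.ofFn fun j => ((p.2 j : Word))) ++ [([] : Word)]) := by
      rw [summable_sigma_of_nonneg hGnn]
      constructor
      · intro n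
        exact Summable.of_finite
      · apply Summable.congr ((hsummable e e).mul_right (U i []))
        intro n
        rw [tsum_fintype, hfib n]
    rw [step1, step2, Summable.tsum_sigma hGsummable]
    have h11 : ∀ n : ℕ,
        (∑' y : Fin n → {u : Word // u ∈ T ∧ i <+: u ∧ u.length < h},
          wgt U (i :: (List.ofFn fun j => ((y j : Word))) ++ [([] : Word)]))
        = (M ^ n) e e * U i [] := by
      intro n
      rw [tsum_fintype, hfib n]
    rw [tsum_congr h11, tsum_mul_right]
  rw [hq]
  -- determinant formula
  have hAinv : (1 - M)⁻¹ = A := Matrix.inv_eq_right_inv hone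
  have hAe : (∑' n : ℕ, (M ^ n) e e) = A e e := rfl
  have hadj : (1 - M).adjugate e e =
      (1 - Matrix.of
        (fun a b : {x : {u : Word // u ∈ T ∧ i <+: u ∧ u.length < h} // x.1 ≠ i} =>
          U a.1.1 b.1.1)).det := by
    rw [Matrix.adjugate_apply, det_updateRow_single]
    let ee : {x : {u : Word // u ∈ T ∧ i <+: u ∧ u.length < h} // x.1 ≠ i}
        ≃ {x : {u : Word // u ∈ T ∧ i <+: u ∧ u.length < h} // x ≠ e} :=
      { toFun := fun x => ⟨x.1, fun hc => x.2 (congrArg Subtype.val hc)⟩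
        invFun := fun x => ⟨x.1, fun hc => x.2 (Subtype.ext hc)⟩
        left_inv := fun x => rfl
        right_inv := fun x => rfl }
    rw [← Matrix.det_submatrix_equiv_self ee]
    congr 1
    ext a b
    show (1 - M) (ee a).1 (ee b).1 = _
    have hcoe : ∀ x : {x : {u : Word // u ∈ T ∧ i <+: u ∧ u.length < h} // x.1 ≠ i},
        (ee x).1 = x.1 := fun x => rfl
    rw [hcoe a, hcoe b]
    rw [Matrix.sub_apply, Matrix.sub_apply, Matrix.one_apply, Matrix.one_apply]
    have hiff : a.1 = b.1 ↔ a = b := ⟨fun hc => Subtype.ext hc, fun hc => by rw [hc]⟩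
    by_cases hab : a = b
    · rw [if_pos (hiff.mpr hab), if_pos hab]
      rfl
    · rw [if_neg (fun hc => hab (hiff.mp hc)), if_neg hab]
      rfl
  have hfinal : A e e = (1 - Matrix.of
      (fun a b : {x : {u : Word // u ∈ T ∧ i <+: u ∧ u.length < h} // x.1 ≠ i} =>
        U a.1.1 b.1.1)).det / (1 - M).det := by
    rw [← hAinv, Matrix.inv_def, Matrix.smul_apply, hadj, Ring.inverse_eq_inv]
    rw [smul_eq_mul]
    ring
  rw [hAe, hfinal]
end
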